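/- arXiv:2202.12489 — 5 statements merged into one kernel-verified Lean document; each statement's English description precedes it below -/
import Mathlib

section
/- Let n ≥ 2. For 0 ≤ k ≤ n−1 let W_k be the submodule of T_n generated by H_k together with the image F_n(H_k). Then the family (W_k)_{k=0}^{n−1} forms an internal direct sum decomposition of T_n: the submodules W_k are independent and their sum is all of T_n. -/
open scoped BigOperators

set_option maxHeartbeats 1000000
set_option synthInstance.maxHeartbeats 400000

noncomputable section

/-- The ground field `K = ℂ(q)`. -/
abbrev K : Type := RatFunc ℂ

/-- The variable `q` of `K = ℂ(q)`. -/
def q : K := RatFunc.X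

/-- `T n` models the `n`-th tensor power of the vector representation of
`U_q(gl(1|1))`, as functions on binary strings of length `n`. -/
abbrev T (n : ℕ) : Type := (Fin n → Fin 2) → K

/-- The standard basis vector `v_α` of `T n`. -/
def v (n : ℕ) (α : Fin n → Fin 2) : T n := fun β => if β = α then 1 else 0

/-- `v₀^{⊗ n}`, the basis vector of the all-zeroes string. -/
def v0 (n : ℕ) : T n := v n (fun _ => 0)

/-- `w n i` is the basis vector whose string has a single `1` in (1-indexed) position `i`. -/
def w (n i : ℕ) : T n := v n (fun j => if (j : ℕ) + 1 = i then 1 else 0)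

/-- `e i = -w_i + q⁻¹ w_{i+1}`. -/
def e (n i : ℕ) : T n := -(w n i) + q⁻¹ • w n (i + 1)

/-- The `R`-matrix on a pair of strands: entry `Rmat out inp`. -/
def Rmat : Fin 2 × Fin 2 → Fin 2 × Fin 2 → K := fun out inp =>
  if inp = (0, 0) then (if out = (0, 0) then q else 0)
  else if inp = (1, 0) then (if out = (0, 1) then 1 else 0)
  else if inp = (0, 1) then
    (if out = (1, 0) then 1 else if out = (0, 1) then q - q⁻¹ else 0)
  else (if out = (1, 1) then -q⁻¹ else 0)

/-- The `R`-matrix acting at positions `i`, `j` (0-indexed) of `T n`. -/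
def PhiAux (n : ℕ) (i j : Fin n) : T n →ₗ[K] T n where
  toFun f := fun β => ∑ p : Fin 2 × Fin 2,
    Rmat (β i, β j) p * f (Function.update (Function.update β i p.1) j p.2)
  map_add' f g := by
    funext β
    try dsimp only
    simp only [Pi.add_apply]
    rw [← Finset.sum_add_distrib]
    exact Finset.sum_congr rfl fun p _ => by simp [mul_add]
  map_smul' c f := by
    funext β
    try dsimp only
    simp only [Pi.smul_apply, smul_eq_mul, RingHom.id_apply]
    rw [Finset.mul_sum]
    exact Finset.sum_congr rfl fun p _ => by ring

/-- `Phi n t` is the map induced by the braid generator `σ_t` (with `1 ≤ t ≤ n-1`),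
acting through the `R`-matrix at (1-indexed) positions `(t, t+1)`. -/
def Phi (n t : ℕ) : T n →ₗ[K] T n :=
  if h : 0 < t ∧ t < n then PhiAux n ⟨t - 1, by omega⟩ ⟨t, h.2⟩ else 0

/-- The action of `E` on `T n`. -/
def En (n : ℕ) : T n →ₗ[K] T n where
  toFun f := fun β => ∑ i : Fin n,
    if β i = 0 then
      ((-1 : K) ^ (Finset.univ.filter (fun j : Fin n => j < i ∧ β j = 1)).card
        * q⁻¹ ^ (n - 1 - (i : ℕ))) * f (Function.update β i 1)
    else 0
  map_add' f g := by
    funext β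
    try dsimp only
    simp only [Pi.add_apply]
    rw [← Finset.sum_add_distrib]
    refine Finset.sum_congr rfl fun i _ => ?_
    by_cases h : β i = 0 <;> simp [h, mul_add]
  map_smul' c f := by
    funext β
    try dsimp only
    simp only [Pi.smul_apply, smul_eq_mul, RingHom.id_apply]
    rw [Finset.mul_sum]
    refine Finset.sum_congr rfl fun i _ => ?_
    by_cases h : β i = 0 <;> simp [h] <;> ring

/-- The action of `F` on `T n`. -/
def Fn (n : ℕ) : T n →ₗ[K] T n where
  toFun f := fun β => ∑ i : Fin n,
    if β i = 1 then
      ((-1 : K) ^ (Finset.univ.filter (fun j : Fin n => j < i ∧ β j = 1)).card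
        * q ^ (i : ℕ)) * f (Function.update β i 0)
    else 0
  map_add' f g := by
    funext β
    try dsimp only
    simp only [Pi.add_apply]
    rw [← Finset.sum_add_distrib]
    refine Finset.sum_congr rfl fun i _ => ?_
    by_cases h : β i = 1 <;> simp [h, mul_add]
  map_smul' c f := by
    funext β
    try dsimp only
    simp only [Pi.smul_apply, smul_eq_mul, RingHom.id_apply]
    rw [Finset.mul_sum]
    refine Finset.sum_congr rfl fun i _ => ?_
    by_cases h : β i = 1 <;> simp [h] <;> ring

/-- The number of `1`s in a binary string. -/
def wt {n : ℕ} (α : Fin n → Fin 2) : ℕ := (Finset.univ.filter (fun i => α i = 1)).card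

/-- `Tk n k` is the span of the basis vectors with exactly `k` entries equal to `1`. -/
def Tk (n k : ℕ) : Submodule K (T n) :=
  Submodule.span K {f : T n | ∃ α, wt α = k ∧ f = v n α}

/-- `Hk n k` is the space of highest weight vectors of weight `(n-k)ε₁ + kε₂`. -/
def Hk (n k : ℕ) : Submodule K (T n) := LinearMap.ker (En n) ⊓ Tk n k

/-- The bilinear product `m` on `T n`. -/
def mul2 (n : ℕ) (f g : T n) : T n := fun γ =>
  ∑ α : Fin n → Fin 2,
    if (∀ i, α i = 1 → γ i = 1) then
      ((-1 : K) ^ (∑ p ∈ Finset.univ.filter (fun p : Fin n × Fin n => p.1 < p.2),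
          (((fun i => if α i = 1 then 0 else γ i) p.1 : Fin 2) : ℕ) * ((α p.2 : Fin 2) : ℕ)))
        * f α * g (fun i => if α i = 1 then 0 else γ i)
    else 0

/-- The left-iterated product `Ψ(u_1, …, u_k) = m(…m(m(u_1,u_2),u_3)…,u_k)`. -/
def Psi (n : ℕ) : (k : ℕ) → (Fin k → T n) → T n
  | 0, _ => v0 n
  | 1, u => u 0
  | (k + 2), u => mul2 n (Psi n (k + 1) (fun i => u i.castSucc)) (u (Fin.last (k + 1)))

/-- Concatenation (tensor product) `T a ⊗ T b → T (a + b)`. -/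
def conc {a b : ℕ} (f : T a) (g : T b) : T (a + b) := fun γ =>
  f (fun i => γ (Fin.castAdd b i)) * g (fun i => γ (Fin.natAdd a i))

/-- Identification `T a ≃ T b` for `a = b`. -/
def castT {a b : ℕ} (h : a = b) (f : T a) : T b := fun γ => f (fun i => γ (Fin.cast h i))

/-- The block vector `Θ_b = Σ_{r=0}^{b-1} (-1)^r q^{-(b-1-r)} v_{β(r)}`. -/
def Theta (b : ℕ) : T b :=
  ∑ r : Fin b, ((-1 : K) ^ (r : ℕ) * q⁻¹ ^ (b - 1 - (r : ℕ))) •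
    v b (fun i => if i = r then 0 else 1)

/-- The map induced by the braid `λ = σ_{n-1} ⋯ σ_1`. -/
def Lam (n : ℕ) : T n →ₗ[K] T n :=
  ((List.range (n - 1)).map (fun t => Phi n (t + 1))).foldl (fun acc g => g ∘ₗ acc) LinearMap.id

/-- The Vandermonde-type matrix `B(n)`. -/
def B (n : ℕ) : Matrix (Fin n) (Fin n) K :=
  fun i j => q ^ ((i : ℤ) * (n : ℤ) * ((n : ℤ) - 1 - 2 * (j : ℤ)))

/-- `C(n) = B(n)⁻¹`. -/
def Cmat (n : ℕ) : Matrix (Fin n) (Fin n) K := (B n)⁻¹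

/-- A combinatorial string `(a_1, b_1, a_2, b_2, …, b_l, a_{l+1})`. -/
structure GString where
  l : ℕ
  a : Fin (l + 1) → ℕ
  b : Fin l → ℕ

/-- Membership of a string in `S_k` (for strands number `n`). -/
def memSk (n k : ℕ) (s : GString) : Prop :=
  (∀ i, 2 ≤ s.b i) ∧ (∑ i, (s.b i - 1)) = k ∧ ((∑ i, s.a i) + ∑ i, s.b i) = n

/-- The length of the string, computed blockwise. -/
def lenOf : (l : ℕ) → (Fin (l + 1) → ℕ) → (Fin l → ℕ) → ℕ
  | 0, a, _ => a 0
  | (l + 1), a, b => (a 0 + b 0) + lenOf l (fun i => a i.succ) (fun i => b i.succ)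

/-- The concatenation `v₀^{⊗a_1} ⊗ Θ_{b_1} ⊗ ⋯ ⊗ Θ_{b_l} ⊗ v₀^{⊗a_{l+1}}`. -/
def rawphi : (l : ℕ) → (a : Fin (l + 1) → ℕ) → (b : Fin l → ℕ) → T (lenOf l a b)
  | 0, a, _ => v0 (a 0)
  | (l + 1), a, b =>
      conc (conc (v0 (a 0)) (Theta (b 0)))
        (rawphi l (fun i => a i.succ) (fun i => b i.succ))

/-- `φ(s) ∈ T n`, the vector associated to a string `s`. -/
def phi (n : ℕ) (s : GString) : T n :=
  if h : lenOf s.l s.a s.b = n then castT h (rawphi s.l s.a s.b) else 0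


open Finset

def fc {n : ℕ} (β : Fin n → Fin 2) (i : Fin n) : ℕ :=
  (Finset.univ.filter (fun j : Fin n => j < i ∧ β j = 1)).card

def Sg {n : ℕ} (β : Fin n → Fin 2) (i : Fin n) : K := (-1 : K) ^ fc β i

lemma fin2cases (x : Fin 2) : x = 0 ∨ x = 1 := by revert x; decide

lemma expand (n : ℕ) (f : T n) : f = ∑ α : Fin n → Fin 2, f α • v n α := by
  funext β
  rw [Finset.sum_apply]
  simp [v, Finset.sum_ite_eq]

lemma card_filter_update {n : ℕ} (β : Fin n → Fin 2) (j : Fin n) (x : Fin 2)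
    (p : Fin n → Fin 2 → Prop) [∀ a b, Decidable (p a b)] :
    (Finset.univ.filter (fun a => p a (Function.update β j x a))).card
      + (if p j (β j) then 1 else 0)
    = (Finset.univ.filter (fun a => p a (β a))).card + (if p j x then 1 else 0) := by
  rw [Finset.card_filter, Finset.card_filter,
    ← Finset.sum_erase_add _ _ (Finset.mem_univ j),
    ← Finset.sum_erase_add _ _ (Finset.mem_univ j)]
  have h : ∑ a ∈ Finset.univ.erase j, (if p a (Function.update β j x a) then 1 else 0)
      = ∑ a ∈ Finset.univ.erase j, (if p a (β a) then 1 else 0) :=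
    Finset.sum_congr rfl fun a ha => by
      rw [Function.update_of_ne (Finset.ne_of_mem_erase ha)]
  rw [Function.update_self, h]
  omega

def eps (c : Prop) [Decidable c] : K := if c then -1 else 1

lemma sg_update {n : ℕ} (β : Fin n → Fin 2) (j : Fin n) (x : Fin 2) (i : Fin n) :
    Sg (Function.update β j x) i * eps ((j < i) ∧ β j = 1)
      = Sg β i * eps ((j < i) ∧ x = 1) := by
  have h := card_filter_update β j x (fun a b => a < i ∧ b = 1)
  have h2 := congrArg (fun m => (-1 : K) ^ m) h
  simpa [Sg, fc, eps, pow_add, apply_ite (fun m : ℕ => (-1 : K) ^ m)] using h2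

lemma sg_sq {n : ℕ} (β : Fin n → Fin 2) (i : Fin n) : Sg β i * Sg β i = 1 := by
  rw [Sg, ← pow_add, ← two_mul, pow_mul]
  norm_num

lemma sg_update_high {n : ℕ} (β : Fin n → Fin 2) (j : Fin n) (x : Fin 2) (i : Fin n)
    (h : ¬ j < i) : Sg (Function.update β j x) i = Sg β i := by
  have := sg_update β j x i
  simpa [eps, h] using this

lemma wt_update {n : ℕ} (β : Fin n → Fin 2) (j : Fin n) (x : Fin 2) :
    wt (Function.update β j x) + (if β j = 1 then 1 else 0)
      = wt β + (if x = 1 then 1 else 0) :=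
  card_filter_update β j x (fun _ b => b = 1)

lemma wt_update_one {n : ℕ} (β : Fin n → Fin 2) (j : Fin n) (h : β j = 0) :
    wt (Function.update β j 1) = wt β + 1 := by
  have := wt_update β j 1
  simp [h] at this
  simpa using this

lemma wt_update_zero {n : ℕ} (β : Fin n → Fin 2) (j : Fin n) (h : β j = 1) :
    wt (Function.update β j 0) + 1 = wt β := by
  have := wt_update β j 0
  simpa [h] using this

lemma wt_le {n : ℕ} (β : Fin n → Fin 2) : wt β ≤ n := by
  rw [wt]
  calc (Finset.univ.filter (fun i => β i = 1)).card ≤ Finset.univ.card :=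
        Finset.card_filter_le _ _
    _ = n := by simp

/-- Submodule of functions supported on weight-`k` strings. -/
def TkS (n k : ℕ) : Submodule K (T n) where
  carrier := {f | ∀ β, wt β ≠ k → f β = 0}
  add_mem' := by
    intro a b ha hb β h
    show a β + b β = 0
    rw [ha β h, hb β h, add_zero]
  zero_mem' := fun β _ => rfl
  smul_mem' := by
    intro c a ha β h
    show c * a β = 0
    rw [ha β h, mul_zero]

lemma mem_TkS {n k : ℕ} {f : T n} :
    f ∈ TkS n k ↔ ∀ β, wt β ≠ k → f β = 0 := Iff.rfl

lemma Tk_eq_TkS (n k : ℕ) : Tk n k = TkS n k := by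
  apply le_antisymm
  · rw [Tk, Submodule.span_le]
    rintro f ⟨α, hα, rfl⟩
    intro β h
    show (if β = α then (1:K) else 0) = 0
    rw [if_neg]
    rintro rfl
    exact h hα
  · intro f hf
    rw [expand n f]
    refine Submodule.sum_mem _ (fun α _ => ?_)
    by_cases hα : wt α = k
    · exact Submodule.smul_mem _ _ (Submodule.subset_span ⟨α, hα, rfl⟩)
    · rw [hf α hα, zero_smul]
      exact Submodule.zero_mem _

lemma En_apply {n : ℕ} (f : T n) (β : Fin n → Fin 2) :
    En n f β = ∑ i : Fin n,
      if β i = 0 then (Sg β i * q⁻¹ ^ (n - 1 - (i : ℕ))) * f (Function.update β i 1)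
      else 0 := rfl

lemma Fn_apply {n : ℕ} (f : T n) (β : Fin n → Fin 2) :
    Fn n f β = ∑ i : Fin n,
      if β i = 1 then (Sg β i * q ^ (i : ℕ)) * f (Function.update β i 0)
      else 0 := rfl

lemma En_supp {n k : ℕ} {f : T n} (hf : f ∈ TkS n k) :
    ∀ β, wt β + 1 ≠ k → En n f β = 0 := by
  intro β hβ
  rw [En_apply]
  refine Finset.sum_eq_zero fun i _ => ?_
  by_cases h : β i = 0
  · rw [if_pos h, hf _ (by rw [wt_update_one β i h]; exact hβ), mul_zero]
  · rw [if_neg h]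

lemma Fn_supp {n k : ℕ} {f : T n} (hf : f ∈ TkS n k) : Fn n f ∈ TkS n (k + 1) := by
  intro β hβ
  rw [Fn_apply]
  refine Finset.sum_eq_zero fun i _ => ?_
  by_cases h : β i = 1
  · rw [if_pos h, hf _ (by have := wt_update_zero β i h; omega), mul_zero]
  · rw [if_neg h]

instance : CharZero K := charZero_of_injective_algebraMap (algebraMap ℂ K).injective

lemma eps_congr {c d : Prop} [Decidable c] [Decidable d] (h : c ↔ d) : eps c = eps d := by
  by_cases hc : c
  · rw [eps, if_pos hc, eps, if_pos (h.mp hc)]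
  · rw [eps, if_neg hc, eps, if_neg (fun hd => hc (h.mpr hd))]

lemma eps_of_not {c : Prop} [Decidable c] (h : ¬ c) : eps c = 1 := if_neg h

lemma sg_upd_one {n : ℕ} (β : Fin n → Fin 2) (i j : Fin n) (hi : β i = 0) :
    Sg (Function.update β i 1) j = Sg β j * eps (i < j) := by
  have h := sg_update β i 1 j
  have h0 : ¬ (i < j ∧ β i = 1) := by
    rintro ⟨-, h1⟩
    rw [hi] at h1
    exact absurd h1 (by decide)
  rw [eps_of_not h0, mul_one, eps_congr (d := i < j) (by simp)] at h
  exact h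

lemma sg_upd_zero {n : ℕ} (β : Fin n → Fin 2) (i j : Fin n) (hi : β i = 1) :
    Sg (Function.update β i 0) j * eps (i < j) = Sg β j := by
  have h := sg_update β i 0 j
  have h1 : ¬ (i < j ∧ (0:Fin 2) = 1) := by
    rintro ⟨-, h1⟩
    exact absurd h1 (by decide)
  rw [eps_of_not h1, mul_one, eps_congr (c := i < j ∧ β i = 1) (d := i < j) (by simp [hi])] at h
  exact h

lemma sum_antisym {m : ℕ} (t : Fin m → Fin m → K)
    (h : ∀ i j, t i j + t j i = 0) : ∑ i : Fin m, ∑ j : Fin m, t i j = 0 := by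
  have h2 : (∑ i : Fin m, ∑ j : Fin m, t i j) + (∑ i : Fin m, ∑ j : Fin m, t i j) = 0 := by
    nth_rewrite 2 [Finset.sum_comm]
    rw [← Finset.sum_add_distrib]
    refine Finset.sum_eq_zero fun i _ => ?_
    rw [← Finset.sum_add_distrib]
    exact Finset.sum_eq_zero fun j _ => h i j
  have h3 : (2:K) * (∑ i : Fin m, ∑ j : Fin m, t i j) = 0 := by rw [two_mul]; exact h2
  rcases mul_eq_zero.mp h3 with h4 | h4
  · exact absurd h4 two_ne_zero
  · exact h4

lemma EnEn {n : ℕ} (f : T n) : En n (En n f) = 0 := by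
  funext β
  show En n (En n f) β = (0:K)
  set t : Fin n → Fin n → K := fun i j =>
    if β i = 0 then
      (Sg β i * q⁻¹ ^ (n - 1 - (i:ℕ))) *
        (if Function.update β i 1 j = 0 then
          (Sg (Function.update β i 1) j * q⁻¹ ^ (n - 1 - (j:ℕ))) *
            f (Function.update (Function.update β i 1) j 1)
        else 0)
    else 0 with ht
  have key : En n (En n f) β = ∑ i : Fin n, ∑ j : Fin n, t i j := by
    rw [En_apply]
    refine Finset.sum_congr rfl fun i _ => ?_
    by_cases h : β i = 0
    · rw [if_pos h, En_apply, Finset.mul_sum]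
      refine Finset.sum_congr rfl fun j _ => ?_
      rw [ht]
      simp only [if_pos h]
    · rw [if_neg h]
      exact (Finset.sum_eq_zero fun j _ => by rw [ht]; simp only [if_neg h]).symm
  rw [key]
  refine sum_antisym t fun i j => ?_
  by_cases hij : i = j
  · subst hij
    rw [ht]
    simp only [Function.update_self]
    have h1 : ¬ ((1:Fin 2) = 0) := by decide
    rw [if_neg h1]
    by_cases h : β i = 0 <;> simp [h]
  · have hupd1 : Function.update β i 1 j = β j := Function.update_of_ne (Ne.symm hij) _ _
    have hupd2 : Function.update β j 1 i = β i := Function.update_of_ne hij _ _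
    by_cases hi : β i = 0 <;> by_cases hj : β j = 0
    · -- both zero: main cancellation
      rw [ht]
      simp only [hupd1, hupd2, if_pos hi, if_pos hj]
      rw [Function.update_comm hij 1 1 β]
      rw [sg_upd_one β i j hi, sg_upd_one β j i hj]
      rcases lt_or_gt_of_ne hij with h | h
      · have h2 : ¬ j < i := asymm h
        simp only [eps, if_pos h, if_neg h2]
        ring
      · have h2 : ¬ i < j := asymm h
        simp only [eps, if_neg (asymm h), if_pos h]
        ring
    · rw [ht]; simp only [hupd1, hupd2]; simp [hi, hj]
    · rw [ht]; simp only [hupd1, hupd2]; simp [hi, hj]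
    · rw [ht]; simp only [hupd1, hupd2]; simp [hi, hj]

def cK (n : ℕ) : K := ∑ i : Fin n, q⁻¹ ^ (n - 1 - (i:ℕ)) * q ^ (i:ℕ)

lemma EFFE {n : ℕ} (f : T n) : En n (Fn n f) + Fn n (En n f) = cK n • f := by
  funext β
  show En n (Fn n f) β + Fn n (En n f) β = cK n * f β
  set t1 : Fin n → Fin n → K := fun i j =>
    if β i = 0 then
      (Sg β i * q⁻¹ ^ (n - 1 - (i:ℕ))) *
        (if Function.update β i 1 j = 1 then
          (Sg (Function.update β i 1) j * q ^ (j:ℕ)) *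
            f (Function.update (Function.update β i 1) j 0)
        else 0)
    else 0 with ht1
  set t2 : Fin n → Fin n → K := fun p r =>
    if β p = 1 then
      (Sg β p * q ^ (p:ℕ)) *
        (if Function.update β p 0 r = 0 then
          (Sg (Function.update β p 0) r * q⁻¹ ^ (n - 1 - (r:ℕ))) *
            f (Function.update (Function.update β p 0) r 1)
        else 0)
    else 0 with ht2
  have key1 : En n (Fn n f) β = ∑ i : Fin n, ∑ j : Fin n, t1 i j := by
    rw [En_apply]
    refine Finset.sum_congr rfl fun i _ => ?_
    by_cases h : β i = 0
    · rw [if_pos h, Fn_apply, Finset.mul_sum]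
      refine Finset.sum_congr rfl fun j _ => ?_
      rw [ht1]
      simp only [if_pos h]
    · rw [if_neg h]
      exact (Finset.sum_eq_zero fun j _ => by rw [ht1]; simp only [if_neg h]).symm
  have key2 : Fn n (En n f) β = ∑ i : Fin n, ∑ j : Fin n, t2 j i := by
    rw [Fn_apply]
    have : ∀ p : Fin n,
        (if β p = 1 then (Sg β p * q ^ (p:ℕ)) * En n f (Function.update β p 0) else 0)
          = ∑ r : Fin n, t2 p r := by
      intro p
      by_cases h : β p = 1
      · rw [if_pos h, En_apply, Finset.mul_sum]
        refine Finset.sum_congr rfl fun r _ => ?_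
        rw [ht2]
        simp only [if_pos h]
      · rw [if_neg h]
        exact (Finset.sum_eq_zero fun r _ => by rw [ht2]; simp only [if_neg h]).symm
    rw [Finset.sum_congr rfl (fun p _ => this p)]
    exact Finset.sum_comm
  rw [key1, key2, ← Finset.sum_add_distrib]
  have step : ∀ i : Fin n,
      (∑ j : Fin n, t1 i j) + (∑ j : Fin n, t2 j i)
        = (q⁻¹ ^ (n - 1 - (i:ℕ)) * q ^ (i:ℕ)) * f β := by
    intro i
    rw [← Finset.sum_add_distrib]
    have per : ∀ j : Fin n, t1 i j + t2 j i
        = if j = i then (q⁻¹ ^ (n - 1 - (i:ℕ)) * q ^ (i:ℕ)) * f β else 0 := by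
      intro j
      by_cases hij : j = i
      · subst hij
        rw [if_pos rfl, ht1, ht2]
        simp only [Function.update_self, Function.update_idem]
        have hsg : ∀ x : Fin 2, Sg (Function.update β j x) j = Sg β j :=
          fun x => sg_update_high β j x j (lt_irrefl j)
        rcases fin2cases (β j) with h | h
        · have hne : ¬ (β j = 1) := by rw [h]; decide
          have hupd : Function.update β j 0 = β := by rw [← h]; exact Function.update_eq_self j β
          rw [if_pos h, if_neg hne]
          rw [if_pos trivial, hsg 1, hupd, add_zero]
          linear_combination (q⁻¹ ^ (n - 1 - (j:ℕ)) * q ^ (j:ℕ) * f β) * sg_sq β j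
        · have hne : ¬ (β j = 0) := by rw [h]; decide
          have hupd : Function.update β j 1 = β := by rw [← h]; exact Function.update_eq_self j β
          rw [if_pos h, if_neg hne]
          rw [if_pos trivial, hsg 0, hupd, zero_add]
          linear_combination (q⁻¹ ^ (n - 1 - (j:ℕ)) * q ^ (j:ℕ) * f β) * sg_sq β j
      · rw [if_neg hij]
        have hij' : i ≠ j := fun h => hij h.symm
        have hupd1 : Function.update β i 1 j = β j := Function.update_of_ne hij _ _
        have hupd2 : Function.update β j 0 i = β i := Function.update_of_ne hij' _ _
        rcases fin2cases (β i) with hi | hi <;> rcases fin2cases (β j) with hj | hj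
        · -- β i = 0, β j = 0 : both vanish
          rw [ht1, ht2]
          simp only [hupd1, hupd2]
          simp [hi, hj]
        · -- β i = 0, β j = 1 : cancellation
          rw [ht1, ht2]
          simp only [hupd1, hupd2, if_pos hi, if_pos hj]
          rw [Function.update_comm hij' 1 0 β]
          rw [sg_upd_one β i j hi]
          rcases lt_or_gt_of_ne hij' with h | h
          · have h6 : Sg (Function.update β j 0) i = Sg β i := by
              have h5 := sg_upd_zero β j i hj
              rw [eps_of_not (asymm h), mul_one] at h5
              exact h5
            rw [h6]
            simp only [eps, if_pos h]
            ring
          · have h6 : Sg (Function.update β j 0) i = - Sg β i := by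
              have h5 := sg_upd_zero β j i hj
              rw [eps, if_pos h] at h5
              linear_combination - h5
            rw [h6]
            simp only [eps, if_neg (asymm h)]
            ring
        · -- β i = 1
          rw [ht1, ht2]
          simp only [hupd1, hupd2]
          simp [hi, hj]
        · rw [ht1, ht2]
          simp only [hupd1, hupd2]
          simp [hi, hj]
    rw [Finset.sum_congr rfl (fun j _ => per j)]
    simp
  rw [Finset.sum_congr rfl (fun i _ => step i), cK, Finset.sum_mul]

lemma q_ne_zero : q ≠ 0 := RatFunc.X_ne_zero

lemma cK_ne_zero {n : ℕ} (hn : 1 ≤ n) : cK n ≠ 0 := by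
  have hmul : cK n * q ^ (n - 1) = ∑ i : Fin n, q ^ (2 * (i:ℕ)) := by
    rw [cK, Finset.sum_mul]
    refine Finset.sum_congr rfl fun i _ => ?_
    have hsplit : q ^ (n - 1) = q ^ (n - 1 - (i:ℕ)) * q ^ (i:ℕ) := by
      rw [← pow_add]
      congr 1
      have := i.isLt
      omega
    have h1 : q⁻¹ ^ (n - 1 - (i:ℕ)) * q ^ (n - 1 - (i:ℕ)) = 1 := by
      rw [← mul_pow, inv_mul_cancel₀ q_ne_zero, one_pow]
    rw [hsplit, two_mul (i:ℕ), pow_add]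
    calc q⁻¹ ^ (n - 1 - (i:ℕ)) * q ^ (i:ℕ) * (q ^ (n - 1 - (i:ℕ)) * q ^ (i:ℕ))
        = (q⁻¹ ^ (n - 1 - (i:ℕ)) * q ^ (n - 1 - (i:ℕ))) * (q ^ (i:ℕ) * q ^ (i:ℕ)) := by ring
      _ = q ^ (i:ℕ) * q ^ (i:ℕ) := by rw [h1, one_mul]
  have hsum : (∑ i : Fin n, q ^ (2 * (i:ℕ))) ≠ 0 := by
    have heq : (∑ i : Fin n, q ^ (2 * (i:ℕ)))
        = algebraMap (Polynomial ℂ) K (∑ i : Fin n, Polynomial.X ^ (2 * (i:ℕ))) := by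
      rw [map_sum]
      refine Finset.sum_congr rfl fun i _ => ?_
      rw [map_pow, RatFunc.algebraMap_X]
      rfl
    rw [heq]
    apply RatFunc.algebraMap_ne_zero
    intro hzero
    have hco := congrArg (fun p => Polynomial.coeff p 0) hzero
    simp only [Polynomial.finset_sum_coeff, Polynomial.coeff_X_pow, Polynomial.coeff_zero] at hco
    rw [Finset.sum_eq_single (⟨0, hn⟩ : Fin n) (fun b _ hb => by
        rw [if_neg]
        intro h
        apply hb
        apply Fin.ext
        show (b:ℕ) = 0
        omega)
      (fun h => absurd (Finset.mem_univ _) h)] at hco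
    simp at hco
  intro h0
  rw [h0, zero_mul] at hmul
  exact hsum hmul.symm

lemma TkS_high {n k : ℕ} (hk : n < k) {f : T n} (hf : f ∈ TkS n k) : f = 0 := by
  funext β
  exact hf β (by have := wt_le β; omega)

/-- membership in the big sup -/
lemma mem_S {n : ℕ} (hn : 2 ≤ n) (j : ℕ) (x : T n) (hx : x ∈ TkS n j) :
    x ∈ ⨆ k : Fin n, (Hk n (k:ℕ) ⊔ Submodule.map (Fn n) (Hk n (k:ℕ))) := by
  set S := ⨆ k : Fin n, (Hk n (k:ℕ) ⊔ Submodule.map (Fn n) (Hk n (k:ℕ))) with hS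
  have hWle : ∀ k : Fin n, Hk n (k:ℕ) ⊔ Submodule.map (Fn n) (Hk n (k:ℕ)) ≤ S :=
    fun k => le_iSup (fun k : Fin n => Hk n (k:ℕ) ⊔ Submodule.map (Fn n) (Hk n (k:ℕ))) k
  have hEx_ker : En n (En n x) = 0 := EnEn x
  have hEFx_ker : En n (En n (Fn n x)) = 0 := EnEn (Fn n x)
  have hcx : En n (Fn n x) + Fn n (En n x) = cK n • x := EFFE x
  have hc := cK_ne_zero (n := n) (by omega)
  -- x = c⁻¹ • (EF x) + c⁻¹ • (F (E x))
  have hxeq : x = (cK n)⁻¹ • En n (Fn n x) + (cK n)⁻¹ • Fn n (En n x) := by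
    rw [← smul_add, hcx, smul_smul, inv_mul_cancel₀ hc, one_smul]
  rcases lt_or_ge j n with hj | hj
  · -- EF x ∈ Hk n j
    have hEF_Tk : En n (Fn n x) ∈ TkS n j := by
      intro β hβ
      exact En_supp (Fn_supp hx) β (by omega)
    have hEF_mem : En n (Fn n x) ∈ Hk n j := by
      rw [Hk, Tk_eq_TkS]
      exact ⟨LinearMap.mem_ker.mpr hEFx_ker, hEF_Tk⟩
    rcases Nat.eq_zero_or_pos j with hj0 | hj0
    · -- E x = 0
      have hEx0 : En n x = 0 := by
        funext β
        exact En_supp hx β (by omega)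
      rw [hxeq, hEx0, map_zero, smul_zero, add_zero]
      exact Submodule.smul_mem _ _ (hWle ⟨j, hj⟩ (Submodule.mem_sup_left hEF_mem))
    · have hEx_mem : En n x ∈ Hk n (j - 1) := by
        rw [Hk, Tk_eq_TkS]
        refine ⟨LinearMap.mem_ker.mpr hEx_ker, ?_⟩
        intro β hβ
        exact En_supp hx β (by omega)
      rw [hxeq]
      refine Submodule.add_mem _ ?_ ?_
      · exact Submodule.smul_mem _ _ (hWle ⟨j, hj⟩ (Submodule.mem_sup_left hEF_mem))
      · refine Submodule.smul_mem _ _ (hWle ⟨j - 1, by omega⟩ (Submodule.mem_sup_right ?_))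
        exact Submodule.mem_map_of_mem hEx_mem
  · rcases Nat.eq_or_lt_of_le hj with hj' | hj'
    · -- j = n : F x = 0, x = c⁻¹ F E x
      have hFx0 : Fn n x = 0 := TkS_high (by omega) (Fn_supp hx)
      have hEx_mem : En n x ∈ Hk n (j - 1) := by
        rw [Hk, Tk_eq_TkS]
        refine ⟨LinearMap.mem_ker.mpr hEx_ker, ?_⟩
        intro β hβ
        exact En_supp hx β (by omega)
      rw [hxeq, hFx0, map_zero, smul_zero, zero_add]
      refine Submodule.smul_mem _ _ (hWle ⟨j - 1, by omega⟩ (Submodule.mem_sup_right ?_))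
      exact Submodule.mem_map_of_mem hEx_mem
    · rw [TkS_high hj' hx]
      exact Submodule.zero_mem _

lemma v_mem_TkS {n : ℕ} (α : Fin n → Fin 2) : v n α ∈ TkS n (wt α) := by
  intro β hβ
  show (if β = α then (1:K) else 0) = 0
  rw [if_neg]
  rintro rfl
  exact hβ rfl

lemma Wsup_eq_top {n : ℕ} (hn : 2 ≤ n) :
    (⨆ k : Fin n, (Hk n (k:ℕ) ⊔ Submodule.map (Fn n) (Hk n (k:ℕ)))) = ⊤ := by
  rw [eq_top_iff]
  intro f _
  rw [expand n f]
  refine Submodule.sum_mem _ fun α _ => ?_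
  exact Submodule.smul_mem _ _ (mem_S hn (wt α) (v n α) (v_mem_TkS α))

lemma graded_zero {n : ℕ} (m : ℕ) (y : ℕ → T n)
    (hy : ∀ j β, wt β ≠ j → y j β = 0)
    (hs : ∑ j ∈ Finset.range m, y j = 0) : ∀ j, j < m → y j = 0 := by
  intro j hj
  funext β
  show y j β = 0
  by_cases hw : wt β = j
  · have h0 : ∑ i ∈ Finset.range m, y i β = 0 := by
      have := congrFun hs β
      rw [Finset.sum_apply] at this
      simpa using this
    rw [Finset.sum_eq_single j (fun b _ hb => hy b β (by omega))
      (fun h => absurd (Finset.mem_range.mpr hj) h)] at h0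
    exact h0
  · exact hy j β hw

lemma key_indep {n : ℕ} (hn : 2 ≤ n) (x : Fin n → T n)
    (hx : ∀ k : Fin n, x k ∈ Hk n (k:ℕ) ⊔ Submodule.map (Fn n) (Hk n (k:ℕ)))
    (hs : ∑ k, x k = 0) : ∀ k, x k = 0 := by
  have hc := cK_ne_zero (n := n) (by omega)
  have hch : ∀ k : Fin n, ∃ h, h ∈ Hk n (k:ℕ) ∧ ∃ g, g ∈ Hk n (k:ℕ) ∧ h + Fn n g = x k := by
    intro k
    rcases Submodule.mem_sup.mp (hx k) with ⟨h, hh, z, hz, hsum⟩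
    rcases Submodule.mem_map.mp hz with ⟨g, hg, rfl⟩
    exact ⟨h, hh, g, hg, hsum⟩
  choose h hh g hg hxk using hch
  have hhTk : ∀ k : Fin n, h k ∈ TkS n (k:ℕ) := fun k =>
    (Tk_eq_TkS n (k:ℕ)) ▸ (Submodule.mem_inf.mp (hh k)).2
  have hgTk : ∀ k : Fin n, g k ∈ TkS n (k:ℕ) := fun k =>
    (Tk_eq_TkS n (k:ℕ)) ▸ (Submodule.mem_inf.mp (hg k)).2
  have hhker : ∀ k : Fin n, En n (h k) = 0 := fun k =>
    LinearMap.mem_ker.mp (Submodule.mem_inf.mp (hh k)).1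
  have hgker : ∀ k : Fin n, En n (g k) = 0 := fun k =>
    LinearMap.mem_ker.mp (Submodule.mem_inf.mp (hg k)).1
  set y : ℕ → T n := fun j =>
    (if hj : j < n then h ⟨j, hj⟩ else 0) +
    (if hj : 0 < j ∧ j ≤ n then Fn n (g ⟨j - 1, by omega⟩) else 0) with hy
  have hysupp : ∀ j β, wt β ≠ j → y j β = 0 := by
    intro j β hβ
    rw [hy]
    simp only [Pi.add_apply]
    have h1 : (if hj : j < n then h ⟨j, hj⟩ else 0) β = 0 := by
      split_ifs with hj
      · exact hhTk ⟨j, hj⟩ β hβ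
      · rfl
    have h2 : (if hj : 0 < j ∧ j ≤ n then Fn n (g ⟨j - 1, by omega⟩) else 0) β = 0 := by
      split_ifs with hj
      · have hf := Fn_supp (hgTk ⟨j - 1, by omega⟩)
        have hj1 : ((⟨j - 1, by omega⟩ : Fin n) : ℕ) + 1 = j := by
          show (j - 1) + 1 = j
          omega
        rw [hj1] at hf
        exact hf β hβ
      · rfl
    rw [h1, h2, add_zero]
  have hysum : ∑ j ∈ Finset.range (n + 1), y j = 0 := by
    have hA : ∑ j ∈ Finset.range (n + 1), (if hj : j < n then h ⟨j, hj⟩ else 0)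
        = ∑ k : Fin n, h k := by
      rw [Finset.sum_range_succ, dif_neg (lt_irrefl n), add_zero,
        ← Fin.sum_univ_eq_sum_range (fun j => if hj : j < n then h ⟨j, hj⟩ else 0) n]
      exact Finset.sum_congr rfl fun k _ => by rw [dif_pos k.isLt]
    have hB : ∑ j ∈ Finset.range (n + 1),
        (if hj : 0 < j ∧ j ≤ n then Fn n (g ⟨j - 1, by omega⟩) else 0)
        = ∑ k : Fin n, Fn n (g k) := by
      rw [Finset.sum_range_succ']
      have hzero : (if hj : 0 < 0 ∧ 0 ≤ n then Fn n (g ⟨0 - 1, by omega⟩) else 0) = 0 :=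
        dif_neg (by omega)
      rw [hzero, add_zero,
        ← Fin.sum_univ_eq_sum_range
          (fun j => if hj : 0 < j + 1 ∧ j + 1 ≤ n then Fn n (g ⟨j + 1 - 1, by omega⟩) else 0) n]
      refine Finset.sum_congr rfl fun k _ => ?_
      rw [dif_pos ⟨Nat.succ_pos _, k.isLt⟩]
      have hk : (⟨(k:ℕ) + 1 - 1, by omega⟩ : Fin n) = k := Fin.ext (by simp)
      rw [hk]
    rw [hy, Finset.sum_add_distrib, hA, hB, ← Finset.sum_add_distrib]
    rw [Finset.sum_congr rfl fun k _ => hxk k]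
    exact hs
  have hyz := graded_zero (n + 1) y hysupp hysum
  have main : ∀ j (h1 : 0 < j) (h2 : j ≤ n),
      g ⟨j - 1, by omega⟩ = 0 ∧ (if hj : j < n then h ⟨j, hj⟩ else 0) = 0 := by
    intro j h1 h2
    have hyj := hyz j (by omega)
    rw [hy] at hyj
    simp only at hyj
    rw [dif_pos (⟨h1, h2⟩ : 0 < j ∧ j ≤ n)] at hyj
    set A := (if hj : j < n then h ⟨j, hj⟩ else 0) with hA
    have hEA : En n A = 0 := by
      rw [hA]
      split_ifs with hj
      · exact hhker _
      · exact map_zero _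
    have hEF : En n (Fn n (g ⟨j - 1, by omega⟩)) = 0 := by
      have := congrArg (En n) hyj
      rw [map_add, map_zero, hEA, zero_add] at this
      exact this
    have hgz : g ⟨j - 1, by omega⟩ = 0 := by
      have hsm : cK n • g ⟨j - 1, by omega⟩ = 0 := by
        rw [← EFFE (g ⟨j - 1, by omega⟩), hEF, hgker, map_zero, add_zero]
      rcases smul_eq_zero.mp hsm with h' | h'
      · exact absurd h' hc
      · exact h'
    refine ⟨hgz, ?_⟩
    rw [hgz, map_zero, add_zero] at hyj
    exact hyj
  have hgz : ∀ k : Fin n, g k = 0 := by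
    intro k
    have := (main ((k:ℕ) + 1) (Nat.succ_pos _) k.isLt).1
    have hk : (⟨(k:ℕ) + 1 - 1, by omega⟩ : Fin n) = k := Fin.ext (by simp)
    rwa [hk] at this
  have hhz : ∀ k : Fin n, h k = 0 := by
    intro k
    rcases Nat.eq_zero_or_pos (k:ℕ) with hk0 | hk0
    · have hy0 := hyz 0 (by omega)
      rw [hy] at hy0
      simp only at hy0
      rw [dif_pos (by omega : (0:ℕ) < n), dif_neg (by omega), add_zero] at hy0
      have hk : (⟨0, by omega⟩ : Fin n) = k := Fin.ext (by simp [hk0])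
      rwa [hk] at hy0
    · have := (main (k:ℕ) hk0 (le_of_lt k.isLt)).2
      rw [dif_pos k.isLt] at this
      have hk : (⟨(k:ℕ), k.isLt⟩ : Fin n) = k := Fin.ext rfl
      rwa [hk] at this
  intro k
  rw [← hxk k, hhz k, hgz k, map_zero, add_zero]

theorem stmt12' (n : ℕ) (hn : 2 ≤ n) :
    DirectSum.IsInternal (fun k : Fin n =>
      Hk n (k : ℕ) ⊔ Submodule.map (Fn n) (Hk n (k : ℕ))) := by
  apply DirectSum.isInternal_submodule_of_iSupIndep_of_iSup_eq_top
  · apply iSupIndep_of_dfinsupp_lsum_injective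
    classical
    rw [injective_iff_map_eq_zero]
    intro m hm
    rw [DFinsupp.lsum_apply_apply, DFinsupp.sumAddHom_apply,
      DFinsupp.sum_eq_sum_fintype _ (fun i => by simp)] at hm
    have hsum : ∑ k : Fin n, ((m k : T n)) = 0 := by
      simpa [DFinsupp.equivFunOnFintype] using hm
    have hz := key_indep hn (fun k => (m k : T n)) (fun k => (m k).2) hsum
    exact DFinsupp.ext fun k => Subtype.ext (hz k)
  · exact Wsup_eq_top hn

theorem stmt12 (n : ℕ) (hn : 2 ≤ n) :
    DirectSum.IsInternal (fun k : Fin n =>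
      Hk n (k : ℕ) ⊔ Submodule.map (Fn n) (Hk n (k : ℕ))) := by
  exact stmt12' n hn

end
end

section
/- Let n ≥ 2 and 1 ≤ k ≤ n−1. For every string s = (a_1, b_1, …, b_l, a_{l+1}) ∈ S_k, set c_j = a_1 + Σ_{i=1}^{j−1}(b_i + a_{i+1}) and let {i_1 < i_2 < ⋯ < i_k} = ∪_{j=1}^{l} {c_j+1, c_j+2, …, c_j+b_j−1}. Then φ(s) = Ψ(e_{i_1}, e_{i_2}, …, e_{i_k}). In particular, the set {φ(s) : s ∈ S_k} coincides with the set of iterated products Ψ(e_{i_1}, …, e_{i_k}) over all strictly increasing tuples 1 ≤ i_1 < ⋯ < i_k ≤ n−1. -/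
open scoped BigOperators

set_option maxHeartbeats 1000000
set_option synthInstance.maxHeartbeats 400000

noncomputable section

/-- indicator basis vector of a finset of 1-indexed positions -/
def vF (n : ℕ) (S : Finset ℕ) : T n := v n (fun j => if (j : ℕ) + 1 ∈ S then 1 else 0)

lemma vF_empty (n : ℕ) : vF n ∅ = v0 n := by simp [vF, v0]

lemma w_eq_vF (n j : ℕ) : w n j = vF n {j} := by simp [w, vF]

lemma mul2_add_left (n : ℕ) (f g h : T n) :
    mul2 n (f + g) h = mul2 n f h + mul2 n g h := by
  funext γ
  simp only [mul2, Pi.add_apply, ← Finset.sum_add_distrib]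
  refine Finset.sum_congr rfl fun α _ => ?_
  split <;> ring

lemma mul2_smul_left (n : ℕ) (c : K) (f h : T n) :
    mul2 n (c • f) h = c • mul2 n f h := by
  funext γ
  simp only [mul2, Pi.smul_apply, smul_eq_mul, Finset.mul_sum]
  refine Finset.sum_congr rfl fun α _ => ?_
  split <;> ring

lemma mul2_zero_left (n : ℕ) (h : T n) : mul2 n 0 h = 0 := by
  funext γ
  simp [mul2]

lemma mul2_add_right (n : ℕ) (f g h : T n) :
    mul2 n f (g + h) = mul2 n f g + mul2 n f h := by
  funext γ
  simp only [mul2, Pi.add_apply, ← Finset.sum_add_distrib]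
  refine Finset.sum_congr rfl fun α _ => ?_
  split <;> ring

lemma mul2_smul_right (n : ℕ) (c : K) (f h : T n) :
    mul2 n f (c • h) = c • mul2 n f h := by
  funext γ
  simp only [mul2, Pi.smul_apply, smul_eq_mul, Finset.mul_sum]
  refine Finset.sum_congr rfl fun α _ => ?_
  split <;> ring

lemma mul2_neg_right (n : ℕ) (f h : T n) : mul2 n f (-h) = -(mul2 n f h) := by
  have := mul2_smul_right n (-1) f h
  simpa using this

lemma mul2_sum_left {ι : Type*} (n : ℕ) (s : Finset ι) (f : ι → T n) (g : T n) :
    mul2 n (∑ i ∈ s, f i) g = ∑ i ∈ s, mul2 n (f i) g := by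
  classical
  induction s using Finset.induction_on with
  | empty => simp [mul2_zero_left]
  | @insert a s' hx ih => simp [Finset.sum_insert hx, mul2_add_left, ih]

lemma mul2_v0_left (n : ℕ) (g : T n) : mul2 n (v0 n) g = g := by
  funext γ
  rw [mul2]
  rw [Finset.sum_eq_single (fun _ => (0 : Fin 2))]
  · have hc : ∀ i : Fin n, (fun _ => (0:Fin 2)) i = 1 → γ i = 1 := by
      intro i hi; simp at hi
    rw [if_pos hc]
    simp [v0, v]
  · intro α _ hne
    split
    · simp [v0, v, hne]
    · rfl
  · simp
lemma mul2_vF_w (n : ℕ) (S : Finset ℕ) (j : ℕ) (hj : ∀ x ∈ S, x < j) :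
    mul2 n (vF n S) (w n j) = vF n (insert j S) := by
  classical
  funext γ
  rw [mul2]
  set αS : Fin n → Fin 2 := (fun i => if (i : ℕ) + 1 ∈ S then 1 else 0) with hαS
  rw [Finset.sum_eq_single αS]
  · by_cases hγ : γ = fun i : Fin n => if (i : ℕ) + 1 ∈ insert j S then 1 else 0
    · have hc : ∀ i, αS i = 1 → γ i = 1 := by
        intro i hi
        by_cases h : (i : ℕ) + 1 ∈ S
        · rw [hγ]; simp [Finset.mem_insert, h]
        · simp [hαS, h] at hi
      rw [if_pos hc]
      have hcompl : (fun i => if αS i = 1 then (0 : Fin 2) else γ i)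
          = fun i : Fin n => if (i : ℕ) + 1 = j then 1 else 0 := by
        funext i
        by_cases h : (i : ℕ) + 1 ∈ S
        · have h1 : αS i = 1 := by simp [hαS, h]
          rw [if_pos h1]
          have : (i : ℕ) + 1 ≠ j := Nat.ne_of_lt (hj _ h)
          simp [this]
        · have h1 : ¬ αS i = 1 := by simp [hαS, h]
          rw [if_neg h1, hγ]
          simp [Finset.mem_insert, h]
      have hsign : (∑ p ∈ Finset.univ.filter (fun p : Fin n × Fin n => p.1 < p.2),
          (((fun i => if αS i = 1 then (0:Fin 2) else γ i) p.1 : Fin 2) : ℕ)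
            * ((αS p.2 : Fin 2) : ℕ)) = 0 := by
        refine Finset.sum_eq_zero fun p hp => ?_
        have hplt : p.1 < p.2 := (Finset.mem_filter.mp hp).2
        rw [Nat.mul_eq_zero]
        by_cases h2 : (p.2 : ℕ) + 1 ∈ S
        · left
          rw [hcompl]
          have hne : (p.1 : ℕ) + 1 ≠ j := by
            intro hh
            have := hj _ h2
            omega
          simp [hne]
        · right; simp [hαS, h2]
      rw [hsign]
      have hw : w n j (fun i => if αS i = 1 then (0 : Fin 2) else γ i) = 1 := by
        rw [hcompl]; simp [w, v]
      rw [hw]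
      have hvf : vF n S αS = 1 := by simp [vF, v, hαS]
      rw [hvf]
      have : vF n (insert j S) γ = 1 := by rw [hγ]; simp [vF, v]
      rw [this]; ring
    · have hrhs : vF n (insert j S) γ = 0 := by
        simp only [vF, v]
        rw [if_neg hγ]
      rw [hrhs]
      split
      · rename_i hc
        have hne : (fun i => if αS i = 1 then (0 : Fin 2) else γ i)
            ≠ fun p : Fin n => if (p : ℕ) + 1 = j then 1 else 0 := by
          intro heq
          apply hγ
          funext i
          by_cases h : (i : ℕ) + 1 ∈ S
          · have h1 : αS i = 1 := by simp [hαS, h]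
            have := hc i h1
            simp [Finset.mem_insert, h, this]
          · have h1 : ¬ αS i = 1 := by simp [hαS, h]
            have hcompl_i := congrFun heq i
            rw [if_neg h1] at hcompl_i
            simp only [Finset.mem_insert, h, or_false]
            rw [hcompl_i]
        have hw : w n j (fun i => if αS i = 1 then (0 : Fin 2) else γ i) = 0 := by
          simp only [w, v]
          rw [if_neg hne]
        rw [hw]; ring
      · rfl
  · intro α _ hne
    have : vF n S α = 0 := by
      simp only [vF, v]
      rw [if_neg (by exact hne)]
    split
    · rw [this]; ring
    · rfl
  · simp

lemma mul2_vF_w_mem (n : ℕ) (S : Finset ℕ) (j : ℕ) (hjS : j ∈ S) (h1 : 1 ≤ j)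
    (hn : j ≤ n) : mul2 n (vF n S) (w n j) = 0 := by
  classical
  funext γ
  rw [mul2]
  set αS : Fin n → Fin 2 := (fun i => if (i : ℕ) + 1 ∈ S then 1 else 0) with hαS
  rw [Finset.sum_eq_single αS]
  · split
    · have hne : (fun i => if αS i = 1 then (0 : Fin 2) else γ i)
          ≠ fun p : Fin n => if (p : ℕ) + 1 = j then 1 else 0 := by
        intro heq
        have hmem := congrFun heq ⟨j - 1, by omega⟩
        have hv : ((⟨j - 1, by omega⟩ : Fin n) : ℕ) + 1 = j := by simp; omega
        have hα1 : αS ⟨j - 1, by omega⟩ = 1 := by simp [hαS, hv, hjS]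
        rw [if_pos hα1, if_pos hv] at hmem
        exact absurd hmem (by decide)
      have hw : w n j (fun i => if αS i = 1 then (0 : Fin 2) else γ i) = 0 := by
        simp only [w, v]
        rw [if_neg hne]
      rw [hw]
      show _ * _ * (0:K) = (0:T n) γ
      simp
    · rfl
  · intro α _ hne
    have : vF n S α = 0 := by
      simp only [vF, v]
      rw [if_neg (by exact hne)]
    split
    · rw [this]; ring
    · rfl
  · simp
/-- iterated product with `e`'s along a list of indices -/
def foldm (n : ℕ) (x : T n) (L : List ℕ) : T n :=
  L.foldl (fun acc j => mul2 n acc (e n j)) x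

@[simp] lemma foldm_nil (n : ℕ) (x : T n) : foldm n x [] = x := rfl

@[simp] lemma foldm_cons (n : ℕ) (x : T n) (j : ℕ) (L : List ℕ) :
    foldm n x (j :: L) = foldm n (mul2 n x (e n j)) L := rfl

lemma foldm_append_single (n : ℕ) (x : T n) (L : List ℕ) (j : ℕ) :
    foldm n x (L ++ [j]) = mul2 n (foldm n x L) (e n j) := by
  simp [foldm]

lemma foldm_zero (n : ℕ) (L : List ℕ) : foldm n 0 L = 0 := by
  induction L with
  | nil => rfl
  | cons j L ih => simp [mul2_zero_left, ih]

lemma foldm_smul (n : ℕ) (c : K) (x : T n) (L : List ℕ) :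
    foldm n (c • x) L = c • foldm n x L := by
  induction L generalizing x with
  | nil => rfl
  | cons j L ih => simp [mul2_smul_left, ih]

lemma foldm_sum {ι : Type*} (n : ℕ) (s : Finset ι) (f : ι → T n) (L : List ℕ) :
    foldm n (∑ i ∈ s, f i) L = ∑ i ∈ s, foldm n (f i) L := by
  induction L generalizing f with
  | nil => rfl
  | cons j L ih => simp [mul2_sum_left, ih]

lemma mul2_vF_e (n : ℕ) (S : Finset ℕ) (j : ℕ) (h : ∀ x ∈ S, x < j) :
    mul2 n (vF n S) (e n j) = -(vF n (insert j S)) + q⁻¹ • vF n (insert (j+1) S) := by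
  rw [e, mul2_add_right, mul2_neg_right, mul2_smul_right, mul2_vF_w n S j h,
      mul2_vF_w n S (j+1) (fun x hx => lt_trans (h x hx) (Nat.lt_succ_self j))]

lemma mul2_vF_e_mem (n : ℕ) (S : Finset ℕ) (j : ℕ) (hjS : j ∈ S) (h1 : 1 ≤ j)
    (hn : j ≤ n) (h : ∀ x ∈ S, x < j + 1) :
    mul2 n (vF n S) (e n j) = q⁻¹ • vF n (insert (j+1) S) := by
  rw [e, mul2_add_right, mul2_neg_right, mul2_smul_right, mul2_vF_w_mem n S j hjS h1 hn,
      mul2_vF_w n S (j+1) h]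
  simp

/-- the 1-positions of a `Θ`-block at offset `c`, width `m+1`, hole at `c+r+1` -/
def blk (c m r : ℕ) : Finset ℕ := (Finset.Ico (c+1) (c+m+2)).erase (c+r+1)

lemma mem_blk {c m r x : ℕ} :
    x ∈ blk c m r ↔ (x ≠ c+r+1 ∧ c+1 ≤ x ∧ x ≤ c+m+1) := by
  simp [blk, Finset.mem_erase, Finset.mem_Ico]
  omega

lemma foldm_block (n : ℕ) (S : Finset ℕ) (c m : ℕ)
    (hS : ∀ x ∈ S, x ≤ c) (hn : c + m + 1 ≤ n) :
    foldm n (vF n S) ((List.range m).map (fun t => c + 1 + t)) =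
      ∑ r ∈ Finset.range (m+1), ((-1 : K)^r * (q⁻¹)^(m - r)) • vF n (S ∪ blk c m r) := by
  induction m with
  | zero =>
      have : blk c 0 0 = ∅ := by
        ext x
        simp only [mem_blk, Finset.notMem_empty, iff_false]
        omega
      simp [this]
  | succ m ih =>
      have hn' : c + m + 1 ≤ n := by omega
      rw [List.range_succ, List.map_append, List.map_singleton, foldm_append_single,
          ih hn']
      rw [mul2_sum_left]
      have key : ∀ r ∈ Finset.range (m+1),
          mul2 n (((-1 : K)^r * (q⁻¹)^(m - r)) • vF n (S ∪ blk c m r)) (e n (c + 1 + m)) =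
            ((-1 : K)^r * (q⁻¹)^(m + 1 - r)) • vF n (S ∪ blk c (m+1) r)
            + (if r = m then ((-1 : K)^(m+1)) • vF n (S ∪ blk c (m+1) (m+1)) else 0) := by
        intro r hr
        have hrm : r ≤ m := by simpa [Nat.lt_succ_iff] using hr
        rw [mul2_smul_left]
        have hj : c + 1 + m = c + m + 1 := by ring
        rw [hj]
        by_cases hcase : r = m
        · subst hcase
          have hlt : ∀ x ∈ S ∪ blk c r r, x < c + r + 1 := by
            intro x hx
            rcases Finset.mem_union.mp hx with h | h
            · have := hS x h; omega
            · rcases mem_blk.mp h with ⟨h1, h2, h3⟩; omega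
          rw [mul2_vF_e n _ _ hlt]
          have e1 : insert (c+r+1) (S ∪ blk c r r) = S ∪ blk c (r+1) (r+1) := by
            ext x
            simp only [Finset.mem_insert, Finset.mem_union, mem_blk]
            by_cases hxS : x ∈ S
            · simp [hxS]
            · simp only [hxS, false_or, or_false]
              omega
          have e2 : insert (c+r+1+1) (S ∪ blk c r r) = S ∪ blk c (r+1) r := by
            ext x
            simp only [Finset.mem_insert, Finset.mem_union, mem_blk]
            by_cases hxS : x ∈ S
            · simp [hxS]
            · simp only [hxS, false_or, or_false]
              omega
          rw [e1, e2, if_pos rfl]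
          have hsub : r + 1 - r = 1 := by omega
          simp only [Nat.sub_self, pow_zero, mul_one, hsub, pow_one, smul_add,
            smul_neg, smul_smul]
          rw [add_comm]
          congr 1
          rw [← neg_smul]
          congr 1
          ring
        · have hmem : c + m + 1 ∈ S ∪ blk c m r := by
            apply Finset.mem_union_right
            rw [mem_blk]
            omega
          have hlt : ∀ x ∈ S ∪ blk c m r, x < c + m + 1 + 1 := by
            intro x hx
            rcases Finset.mem_union.mp hx with h | h
            · have := hS x h; omega
            · rcases mem_blk.mp h with ⟨h1, h2, h3⟩; omega
          rw [mul2_vF_e_mem n _ _ hmem (by omega) hn' hlt]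
          have e2 : insert (c+m+1+1) (S ∪ blk c m r) = S ∪ blk c (m+1) r := by
            ext x
            simp only [Finset.mem_insert, Finset.mem_union, mem_blk]
            by_cases hxS : x ∈ S
            · simp [hxS]
            · simp only [hxS, false_or, or_false]
              omega
          rw [e2, if_neg hcase, add_zero, smul_smul]
          congr 1
          have : m + 1 - r = (m - r) + 1 := by omega
          rw [this, pow_succ]
          ring
      rw [Finset.sum_congr rfl key, Finset.sum_add_distrib]
      rw [Finset.sum_ite_eq' (Finset.range (m+1)) m, if_pos (by simp)]
      conv_rhs => rw [Finset.sum_range_succ]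
      congr 1
      simp
/-- basis-expansion of a product of blocks -/
def phiSum (n : ℕ) : Finset ℕ → List (ℕ × ℕ) → T n
  | S, [] => vF n S
  | S, (c, m) :: B => ∑ r ∈ Finset.range (m+1),
      ((-1 : K)^r * (q⁻¹)^(m - r)) • phiSum n (S ∪ blk c m r) B

/-- the `e`-indices of a list of blocks -/
def blockIdx : List (ℕ × ℕ) → List ℕ
  | [] => []
  | (c, m) :: B => (List.range m).map (fun t => c + 1 + t) ++ blockIdx B

/-- chain condition for blocks: offsets increase and fit inside `n` -/
def goodB (n : ℕ) : ℕ → List (ℕ × ℕ) → Prop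
  | _, [] => True
  | c0, (c, m) :: B => c0 ≤ c ∧ c + m + 1 ≤ n ∧ goodB n (c + m + 1) B

lemma foldm_append (n : ℕ) (x : T n) (L1 L2 : List ℕ) :
    foldm n x (L1 ++ L2) = foldm n (foldm n x L1) L2 := by
  simp [foldm]

lemma foldm_phiSum (n : ℕ) (S : Finset ℕ) (c0 : ℕ) (B : List (ℕ × ℕ))
    (hS : ∀ x ∈ S, x ≤ c0) (hB : goodB n c0 B) :
    foldm n (vF n S) (blockIdx B) = phiSum n S B := by
  induction B generalizing S c0 with
  | nil => rfl
  | cons p B ih =>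
      obtain ⟨c, m⟩ := p
      obtain ⟨h1, h2, h3⟩ := hB
      rw [blockIdx, foldm_append,
        foldm_block n S c m (fun x hx => le_trans (hS x hx) h1) h2, foldm_sum]
      rw [phiSum]
      refine Finset.sum_congr rfl fun r hr => ?_
      rw [foldm_smul]
      congr 1
      refine ih _ (c + m + 1) (fun x hx => ?_) h3
      rcases Finset.mem_union.mp hx with h | h
      · have := hS x h; omega
      · rcases mem_blk.mp h with ⟨_, _, h⟩; omega
lemma conc_smul_left {a b : ℕ} (c : K) (f : T a) (g : T b) :
    conc (c • f) g = c • conc f g := by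
  funext γ; simp [conc]; ring

lemma conc_smul_right {a b : ℕ} (c : K) (f : T a) (g : T b) :
    conc f (c • g) = c • conc f g := by
  funext γ; simp [conc]; ring

lemma conc_sum_left {ι : Type*} {a b : ℕ} (s : Finset ι) (f : ι → T a) (g : T b) :
    conc (∑ i ∈ s, f i) g = ∑ i ∈ s, conc (f i) g := by
  funext γ; simp [conc, Finset.sum_mul]

lemma conc_sum_right {ι : Type*} {a b : ℕ} (s : Finset ι) (f : T a) (g : ι → T b) :
    conc f (∑ i ∈ s, g i) = ∑ i ∈ s, conc f (g i) := by
  funext γ; simp [conc, Finset.mul_sum]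

lemma conc_vF (a b : ℕ) (S S' : Finset ℕ) (hS : ∀ x ∈ S, x ≤ a)
    (hS' : ∀ x ∈ S', 1 ≤ x) :
    conc (vF a S) (vF b S') = vF (a+b) (S ∪ S'.image (· + a)) := by
  classical
  funext γ
  simp only [conc, vF, v]
  by_cases hγ : γ = fun i : Fin (a+b) => if (i : ℕ) + 1 ∈ S ∪ S'.image (· + a) then 1 else 0
  · rw [if_pos hγ]
    have hL : (fun i : Fin a => γ (Fin.castAdd b i))
        = fun i : Fin a => if (i : ℕ) + 1 ∈ S then 1 else 0 := by
      funext i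
      rw [hγ]
      simp only [Fin.coe_castAdd]
      have hmem : ((i : ℕ) + 1 ∈ S ∪ S'.image (· + a)) ↔ (i : ℕ) + 1 ∈ S := by
        simp only [Finset.mem_union, Finset.mem_image, or_iff_left_iff_imp]
        rintro ⟨x, hx, hxe⟩
        have := hS' x hx
        have hi := i.isLt
        omega
      simp only [hmem]
    have hR : (fun j : Fin b => γ (Fin.natAdd a j))
        = fun j : Fin b => if (j : ℕ) + 1 ∈ S' then 1 else 0 := by
      funext j
      rw [hγ]
      simp only [Fin.coe_natAdd]
      have hmem : (a + (j : ℕ) + 1 ∈ S ∪ S'.image (· + a)) ↔ (j : ℕ) + 1 ∈ S' := by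
        simp only [Finset.mem_union, Finset.mem_image]
        constructor
        · rintro (h | ⟨x, hx, hxe⟩)
          · have := hS _ h; omega
          · have hx' : x = (j : ℕ) + 1 := by omega
            rwa [hx'] at hx
        · intro h; right; exact ⟨(j : ℕ) + 1, h, by omega⟩
      simp only [hmem]
    rw [if_pos hL, if_pos hR, one_mul]
  · rw [if_neg hγ]
    by_cases hL : (fun i : Fin a => γ (Fin.castAdd b i))
        = fun i : Fin a => if (i : ℕ) + 1 ∈ S then 1 else 0
    · by_cases hR : (fun j : Fin b => γ (Fin.natAdd a j))
          = fun j : Fin b => if (j : ℕ) + 1 ∈ S' then 1 else 0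
      · exfalso
        apply hγ
        funext i
        by_cases hi : (i : ℕ) < a
        · have h1 := congrFun hL ⟨(i : ℕ), hi⟩
          have hcast : Fin.castAdd b (⟨(i : ℕ), hi⟩ : Fin a) = i := by
            apply Fin.ext; simp
          rw [hcast] at h1
          rw [h1]
          have hmem : ((i : ℕ) + 1 ∈ S ∪ S'.image (· + a)) ↔ (i : ℕ) + 1 ∈ S := by
            simp only [Finset.mem_union, Finset.mem_image, or_iff_left_iff_imp]
            rintro ⟨x, hx, hxe⟩
            have := hS' x hx
            omega
          simp only [hmem]
        · have hj : (i : ℕ) - a < b := by have := i.isLt; omega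
          have h1 := congrFun hR ⟨(i : ℕ) - a, hj⟩
          have hcast : Fin.natAdd a (⟨(i : ℕ) - a, hj⟩ : Fin b) = i := by
            apply Fin.ext; simp; omega
          rw [hcast] at h1
          rw [h1]
          have hmem : ((i : ℕ) + 1 ∈ S ∪ S'.image (· + a))
              ↔ ((i : ℕ) - a) + 1 ∈ S' := by
            simp only [Finset.mem_union, Finset.mem_image]
            constructor
            · rintro (h | ⟨x, hx, hxe⟩)
              · have := hS _ h; omega
              · have hx' : x = (i : ℕ) - a + 1 := by omega
                rwa [hx'] at hx
            · intro h; right; exact ⟨(i : ℕ) - a + 1, h, by omega⟩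
          simp only [hmem]
      · rw [if_neg hR, mul_zero]
    · rw [if_neg hL, zero_mul]

lemma blk_image (c m r d : ℕ) : (blk c m r).image (· + d) = blk (c + d) m r := by
  ext x
  simp only [Finset.mem_image, mem_blk]
  constructor
  · rintro ⟨y, hy, rfl⟩
    omega
  · intro h
    exact ⟨x - d, by omega, by omega⟩

lemma Theta_eq (b : ℕ) (hb : 1 ≤ b) :
    Theta b = ∑ r ∈ Finset.range b,
      ((-1 : K)^r * (q⁻¹)^(b - 1 - r)) • vF b (blk 0 (b-1) r) := by
  rw [Theta, ← Fin.sum_univ_eq_sum_range]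
  refine Finset.sum_congr rfl fun r _ => ?_
  congr 1
  unfold vF
  have hfun : (fun i : Fin b => if i = r then (0 : Fin 2) else 1)
      = fun j : Fin b => if (j : ℕ) + 1 ∈ blk 0 (b-1) (r : ℕ) then 1 else 0 := by
    funext i
    by_cases h : i = r
    · subst h
      have hm : ¬ ((i : ℕ) + 1 ∈ blk 0 (b-1) (i : ℕ)) := by
        rw [mem_blk]; omega
      simp [hm]
    · have hne : (i : ℕ) ≠ (r : ℕ) := fun hh => h (Fin.ext hh)
      have hm : (i : ℕ) + 1 ∈ blk 0 (b-1) (r : ℕ) := by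
        rw [mem_blk]
        have := i.isLt
        omega
      simp [h, hm]
  rw [hfun]
lemma blk_lower {c m r x : ℕ} (h : x ∈ blk c m r) : 1 ≤ x := by
  rcases mem_blk.mp h with ⟨_, h2, _⟩; omega

lemma conc_phiSum (A A' : ℕ) (S S' : Finset ℕ) (B : List (ℕ × ℕ))
    (hS : ∀ x ∈ S, x ≤ A) (hS' : ∀ x ∈ S', 1 ≤ x) :
    conc (vF A S) (phiSum A' S' B)
      = phiSum (A + A') (S ∪ S'.image (· + A)) (B.map (fun p => (p.1 + A, p.2))) := by
  induction B generalizing S' with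
  | nil => exact conc_vF A A' S S' hS hS'
  | cons p B ih =>
      obtain ⟨c, m⟩ := p
      rw [phiSum, conc_sum_right]
      rw [List.map_cons]
      rw [show (phiSum (A + A') (S ∪ S'.image (· + A))
        (((c, m).1 + A, (c, m).2) :: B.map (fun p => (p.1 + A, p.2)))) = _ from rfl,
        phiSum]
      refine Finset.sum_congr rfl fun r hr => ?_
      rw [conc_smul_right]
      congr 1
      have hS'' : ∀ x ∈ S' ∪ blk c m r, 1 ≤ x := by
        intro x hx
        rcases Finset.mem_union.mp hx with h | h
        · exact hS' x h
        · exact blk_lower h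
      rw [ih (S' ∪ blk c m r) hS'']
      congr 1
      rw [Finset.image_union, blk_image, Finset.union_assoc]

/-- blocks (offset, width-1) of a `GString` -/
def blocksOf : (l : ℕ) → (Fin (l+1) → ℕ) → (Fin l → ℕ) → List (ℕ × ℕ)
  | 0, _, _ => []
  | (l+1), a, b => (a 0, b 0 - 1) ::
      (blocksOf l (fun i => a i.succ) (fun i => b i.succ)).map
        (fun p => (p.1 + (a 0 + b 0), p.2))

lemma rawphi_eq : ∀ (l : ℕ) (a : Fin (l+1) → ℕ) (b : Fin l → ℕ), (∀ i, 2 ≤ b i) →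
    rawphi l a b = phiSum (lenOf l a b) ∅ (blocksOf l a b)
  | 0, a, b, _ => by
      rw [rawphi, blocksOf, phiSum, vF_empty]
      rfl
  | (l+1), a, b, hb => by
      have hb0 : 2 ≤ b 0 := hb 0
      have ihq := rawphi_eq l (fun i => a i.succ) (fun i => b i.succ) (fun i => hb i.succ)
      rw [rawphi, ihq]
      have hinner : conc (v0 (a 0)) (Theta (b 0))
          = ∑ r ∈ Finset.range (b 0),
              ((-1 : K)^r * (q⁻¹)^(b 0 - 1 - r)) • vF (a 0 + b 0) (blk (a 0) (b 0 - 1) r) := by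
        rw [← vF_empty, Theta_eq (b 0) (by omega), conc_sum_right]
        refine Finset.sum_congr rfl fun r hr => ?_
        rw [conc_smul_right]
        congr 1
        rw [conc_vF (a 0) (b 0) ∅ (blk 0 (b 0 - 1) r) (by simp) (fun x hx => blk_lower hx)]
        rw [blk_image, Nat.zero_add, Finset.empty_union]
      rw [hinner, conc_sum_left]
      have hstep : ∀ r ∈ Finset.range (b 0),
          conc (((-1 : K)^r * (q⁻¹)^(b 0 - 1 - r)) • vF (a 0 + b 0) (blk (a 0) (b 0 - 1) r))
            (phiSum (lenOf l (fun i => a i.succ) (fun i => b i.succ))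
              ∅ (blocksOf l (fun i => a i.succ) (fun i => b i.succ)))
          = ((-1 : K)^r * (q⁻¹)^(b 0 - 1 - r)) •
              phiSum (lenOf (l+1) a b) (blk (a 0) (b 0 - 1) r)
                ((blocksOf l (fun i => a i.succ) (fun i => b i.succ)).map
                  (fun p => (p.1 + (a 0 + b 0), p.2))) := by
        intro r hr
        rw [conc_smul_left]
        congr 1
        rw [conc_phiSum (a 0 + b 0) _ _ ∅ _
          (fun x hx => by rcases mem_blk.mp hx with ⟨_, _, h3⟩; omega) (by simp)]
        simp only [Finset.image_empty, Finset.union_empty]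
        rfl
      rw [Finset.sum_congr rfl hstep]
      rw [show blocksOf (l+1) a b = (a 0, b 0 - 1) ::
        (blocksOf l (fun i => a i.succ) (fun i => b i.succ)).map
          (fun p => (p.1 + (a 0 + b 0), p.2)) from rfl]
      rw [phiSum]
      have hrange : b 0 - 1 + 1 = b 0 := by omega
      rw [hrange]
      refine Finset.sum_congr rfl fun r hr => ?_
      congr 1

lemma castT_rfl {a : ℕ} (f : T a) : castT rfl f = f := rfl

lemma phi_eq_phiSum (n : ℕ) (s : GString) (hb : ∀ i, 2 ≤ s.b i)
    (hlen : lenOf s.l s.a s.b = n) :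
    phi n s = phiSum n ∅ (blocksOf s.l s.a s.b) := by
  rw [phi, dif_pos hlen]
  subst hlen
  rw [castT_rfl, rawphi_eq s.l s.a s.b hb]
lemma Psi_foldm (n : ℕ) : ∀ (k : ℕ) (u : Fin k → ℕ),
    Psi n k (fun t => e n (u t)) = foldm n (v0 n) (List.ofFn u)
  | 0, u => rfl
  | 1, u => by
      show e n (u 0) = foldm n (v0 n) (List.ofFn u)
      have h : List.ofFn u = [u 0] := by simp [List.ofFn_succ]
      rw [h, foldm_cons, foldm_nil, mul2_v0_left]
  | (k+2), u => by
      show mul2 n (Psi n (k+1) (fun t => e n (u t.castSucc))) (e n (u (Fin.last (k+1))))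
        = foldm n (v0 n) (List.ofFn u)
      rw [Psi_foldm n (k+1) (fun t => u t.castSucc), List.ofFn_succ' u,
        List.concat_eq_append, foldm_append_single]

lemma lenOf_eq : ∀ (l : ℕ) (a : Fin (l+1) → ℕ) (b : Fin l → ℕ),
    lenOf l a b = (∑ i, a i) + (∑ i, b i)
  | 0, a, b => by simp [lenOf]
  | (l+1), a, b => by
      show (a 0 + b 0) + lenOf l (fun i => a i.succ) (fun i => b i.succ) = _
      rw [lenOf_eq l _ _, Fin.sum_univ_succ a, Fin.sum_univ_succ b]
      ring

/-- the offset of block `j` -/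
def cOf (l : ℕ) (a : Fin (l+1) → ℕ) (b : Fin l → ℕ) (j : Fin l) : ℕ :=
  a 0 + ∑ t ∈ Finset.univ.filter (fun t => t < j), (b t + a t.succ)

lemma cOf_zero (l : ℕ) (a : Fin (l+2) → ℕ) (b : Fin (l+1) → ℕ) :
    cOf (l+1) a b 0 = a 0 := by
  unfold cOf
  rw [Finset.filter_false_of_mem (fun t _ => Fin.not_lt_zero t), Finset.sum_empty]
  omega

lemma cOf_succ (l : ℕ) (a : Fin (l+2) → ℕ) (b : Fin (l+1) → ℕ) (j : Fin l) :
    cOf (l+1) a b j.succ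
      = (a 0 + b 0) + cOf l (fun i => a i.succ) (fun i => b i.succ) j := by
  unfold cOf
  rw [Finset.sum_filter, Fin.sum_univ_succ]
  rw [if_pos (Fin.succ_pos j)]
  simp_rw [Fin.succ_lt_succ_iff]
  rw [← Finset.sum_filter]
  ring

lemma blockIdx_map_shift (d : ℕ) : ∀ B : List (ℕ × ℕ),
    blockIdx (B.map (fun p => (p.1 + d, p.2))) = (blockIdx B).map (· + d)
  | [] => rfl
  | (c, m) :: B => by
      rw [List.map_cons]
      show (List.range m).map (fun t => c + d + 1 + t)
          ++ blockIdx (B.map (fun p => (p.1 + d, p.2)))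
        = ((List.range m).map (fun t => c + 1 + t) ++ blockIdx B).map (· + d)
      rw [List.map_append, blockIdx_map_shift d B, List.map_map]
      congr 1
      apply List.map_congr_left
      intro t _
      show c + d + 1 + t = (c + 1 + t) + d
      omega

lemma blocksOf_succ (l : ℕ) (a : Fin (l+2) → ℕ) (b : Fin (l+1) → ℕ) :
    blocksOf (l+1) a b = (a 0, b 0 - 1) ::
      (blocksOf l (fun i => a i.succ) (fun i => b i.succ)).map
        (fun p => (p.1 + (a 0 + b 0), p.2)) := rfl

lemma lenOf_succ (l : ℕ) (a : Fin (l+2) → ℕ) (b : Fin (l+1) → ℕ) :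
    lenOf (l+1) a b = (a 0 + b 0) + lenOf l (fun i => a i.succ) (fun i => b i.succ) := rfl

lemma blockIdx_bounds : ∀ (l : ℕ) (a : Fin (l+1) → ℕ) (b : Fin l → ℕ),
    (∀ i, 1 ≤ b i) → ∀ x ∈ blockIdx (blocksOf l a b), 1 ≤ x ∧ x + 1 ≤ lenOf l a b
  | 0, a, b, _, x, hx => by simp [blocksOf, blockIdx] at hx
  | (l+1), a, b, hb, x, hx => by
      rw [blocksOf_succ, blockIdx, blockIdx_map_shift] at hx
      rw [lenOf_succ]
      rcases List.mem_append.mp hx with h | h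
      · obtain ⟨t, ht, rfl⟩ := List.mem_map.mp h
        rw [List.mem_range] at ht
        have := hb 0
        omega
      · obtain ⟨y, hy, rfl⟩ := List.mem_map.mp h
        have := blockIdx_bounds l _ _ (fun i => hb i.succ) y hy
        omega

lemma blockIdx_sorted : ∀ (l : ℕ) (a : Fin (l+1) → ℕ) (b : Fin l → ℕ),
    (∀ i, 1 ≤ b i) → List.Pairwise (· < ·) (blockIdx (blocksOf l a b))
  | 0, a, b, _ => List.Pairwise.nil
  | (l+1), a, b, hb => by
      rw [blocksOf_succ, blockIdx, blockIdx_map_shift]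
      rw [List.pairwise_append]
      refine ⟨?_, ?_, ?_⟩
      · exact (List.pairwise_map).mpr ((List.pairwise_lt_range (n := _)).imp (by omega))
      · exact (List.pairwise_map).mpr
          ((blockIdx_sorted l _ _ (fun i => hb i.succ)).imp (by omega))
      · intro x hx y hy
        obtain ⟨t, ht, rfl⟩ := List.mem_map.mp hx
        rw [List.mem_range] at ht
        obtain ⟨z, hz, rfl⟩ := List.mem_map.mp hy
        have := (blockIdx_bounds l _ _ (fun i => hb i.succ) z hz).1
        omega

lemma blockIdx_length : ∀ (l : ℕ) (a : Fin (l+1) → ℕ) (b : Fin l → ℕ),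
    (blockIdx (blocksOf l a b)).length = ∑ i, (b i - 1)
  | 0, a, b => by simp [blocksOf, blockIdx]
  | (l+1), a, b => by
      rw [blocksOf_succ, blockIdx, blockIdx_map_shift, List.length_append,
        List.length_map, List.length_range, List.length_map,
        blockIdx_length l _ _, Fin.sum_univ_succ]

lemma mem_blockIdx : ∀ (l : ℕ) (a : Fin (l+1) → ℕ) (b : Fin l → ℕ) (x : ℕ),
    x ∈ blockIdx (blocksOf l a b)
      ↔ ∃ j : Fin l, cOf l a b j + 1 ≤ x ∧ x < cOf l a b j + b j
  | 0, a, b, x => by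
      constructor
      · intro hx; simp [blocksOf, blockIdx] at hx
      · rintro ⟨j, -⟩; exact j.elim0
  | (l+1), a, b, x => by
      have hiff := mem_blockIdx l (fun i => a i.succ) (fun i => b i.succ)
      rw [blocksOf_succ, blockIdx, blockIdx_map_shift, List.mem_append]
      rw [Fin.exists_fin_succ]
      constructor
      · rintro (h | h)
        · obtain ⟨t, ht, rfl⟩ := List.mem_map.mp h
          rw [List.mem_range] at ht
          left
          rw [cOf_zero]
          omega
        · obtain ⟨y, hy, rfl⟩ := List.mem_map.mp h
          right
          obtain ⟨j, h1, h2⟩ := (hiff y).mp hy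
          refine ⟨j, ?_⟩
          rw [cOf_succ]
          constructor <;> omega
      · rintro (⟨h1, h2⟩ | ⟨j, hj1, hj2⟩)
        · rw [cOf_zero] at h1 h2
          left
          rw [List.mem_map]
          exact ⟨x - a 0 - 1, List.mem_range.mpr (by omega), by omega⟩
        · rw [cOf_succ] at hj1 hj2
          right
          rw [List.mem_map]
          refine ⟨x - (a 0 + b 0), (hiff _).mpr ⟨j, ?_, ?_⟩, by omega⟩ <;> omega

lemma goodB_shift (n d : ℕ) : ∀ (c0 : ℕ) (B : List (ℕ × ℕ)), goodB n c0 B →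
    goodB (d + n) (d + c0) (B.map (fun p => (p.1 + d, p.2)))
  | c0, [], _ => trivial
  | c0, (c, m) :: B, h => by
      obtain ⟨h1, h2, h3⟩ := h
      refine ⟨by omega, by omega, ?_⟩
      have := goodB_shift n d (c + m + 1) B h3
      have harith : d + (c + m + 1) = c + d + m + 1 := by omega
      rw [harith] at this
      exact this

lemma blocksOf_good : ∀ (l : ℕ) (a : Fin (l+1) → ℕ) (b : Fin l → ℕ),
    (∀ i, 1 ≤ b i) → goodB (lenOf l a b) 0 (blocksOf l a b)
  | 0, a, b, _ => trivial
  | (l+1), a, b, hb => by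
      rw [blocksOf_succ, lenOf_succ]
      refine ⟨Nat.zero_le _, by have := hb 0; omega, ?_⟩
      have ih := blocksOf_good l (fun i => a i.succ) (fun i => b i.succ)
        (fun i => hb i.succ)
      have := goodB_shift _ (a 0 + b 0) _ _ ih
      have harith : a 0 + (b 0 - 1) + 1 = (a 0 + b 0) + 0 := by have := hb 0; omega
      rw [harith]
      exact this
lemma part1 (n k : ℕ) (s : GString) (hs : memSk n k s) (i : Fin k → ℕ)
    (hmono : StrictMono i)
    (him : Finset.image i Finset.univ = Finset.univ.biUnion (fun j : Fin s.l =>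
      Finset.Ico (cOf s.l s.a s.b j + 1) (cOf s.l s.a s.b j + s.b j))) :
    phi n s = Psi n k (fun t => e n (i t)) := by
  obtain ⟨hb2, hksum, htot⟩ := hs
  have hb1 : ∀ t, 1 ≤ s.b t := fun t => le_trans one_le_two (hb2 t)
  have hlen : lenOf s.l s.a s.b = n := by rw [lenOf_eq]; exact htot
  have hlist : List.ofFn i = blockIdx (blocksOf s.l s.a s.b) := by
    refine (fun hp h1 h2 => List.Perm.eq_of_pairwise (le := (· < ·)) (fun a b _ _ h1 h2 => absurd (h1.trans h2) (lt_irrefl a)) h1 h2 hp) ?_ ?_ ?_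
    · apply List.perm_of_nodup_nodup_toFinset_eq
      · exact ((List.sortedLT_ofFn_iff.mpr hmono).pairwise).nodup
      · exact (blockIdx_sorted s.l s.a s.b hb1).nodup
      · ext x
        rw [List.mem_toFinset, List.mem_toFinset, mem_blockIdx]
        have h1 : x ∈ List.ofFn i ↔ x ∈ Finset.image i Finset.univ := by
          rw [List.mem_ofFn]
          simp [Set.mem_range]
        rw [h1, him]
        simp [Finset.mem_biUnion, Finset.mem_Ico]
    · exact (List.sortedLT_ofFn_iff.mpr hmono).pairwise
    · exact blockIdx_sorted s.l s.a s.b hb1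
  calc phi n s = phiSum n ∅ (blocksOf s.l s.a s.b) := phi_eq_phiSum n s hb2 hlen
    _ = foldm n (v0 n) (blockIdx (blocksOf s.l s.a s.b)) := by
        rw [← vF_empty]
        exact (foldm_phiSum n ∅ 0 _ (by simp)
          (hlen ▸ blocksOf_good s.l s.a s.b hb1)).symm
    _ = foldm n (v0 n) (List.ofFn i) := by rw [hlist]
    _ = Psi n k (fun t => e n (i t)) := (Psi_foldm n k i).symm
lemma range_map_cons (c m : ℕ) (hc : 1 ≤ c) :
    (List.range (m+1)).map (fun t => (c-1) + 1 + t)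
      = c :: (List.range m).map (fun t => c + 1 + t) := by
  rw [List.range_succ_eq_map, List.map_cons, List.map_map]
  congr 1
  · show c - 1 + 1 + 0 = c
    omega
  · apply List.map_congr_left
    intro t _
    show c - 1 + 1 + (t + 1) = c + 1 + t
    omega

lemma blockIdx_ashift : ∀ (l : ℕ) (a a2 : Fin (l+1) → ℕ) (b : Fin l → ℕ) (d : ℕ),
    a 0 = a2 0 + d → (∀ t : Fin l, a t.succ = a2 t.succ) →
    blockIdx (blocksOf l a b) = (blockIdx (blocksOf l a2 b)).map (· + d)
  | 0, _, _, _, _, _, _ => rfl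
  | (l+1), a, a2, b, d, h0, hs => by
      rw [blocksOf_succ, blocksOf_succ, blockIdx, blockIdx]
      have htail : (fun i : Fin (l+1) => a i.succ) = (fun i => a2 i.succ) := funext hs
      rw [htail, blockIdx_map_shift, blockIdx_map_shift, List.map_append,
        List.map_map, List.map_map]
      congr 1
      · apply List.map_congr_left
        intro t _
        simp only [Function.comp]
        omega
      · apply List.map_congr_left
        intro y _
        simp only [Function.comp]
        omega

lemma blockIdx_merge (l : ℕ) (a : Fin (l+2) → ℕ) (b : Fin (l+1) → ℕ)
    (ha : 1 ≤ a 0) (hb : 1 ≤ b 0) :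
    blockIdx (blocksOf (l+1) (Function.update a 0 (a 0 - 1))
        (Function.update b 0 (b 0 + 1)))
      = (a 0) :: blockIdx (blocksOf (l+1) a b) := by
  rw [blocksOf_succ, blocksOf_succ, blockIdx, blockIdx]
  have hta : (fun i : Fin (l+1) => Function.update a 0 (a 0 - 1) i.succ)
      = fun i => a i.succ :=
    funext fun i => Function.update_of_ne (Fin.succ_ne_zero i) _ _
  have htb : (fun i : Fin l => Function.update b 0 (b 0 + 1) i.succ)
      = fun i => b i.succ :=
    funext fun i => Function.update_of_ne (Fin.succ_ne_zero i) _ _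
  rw [hta, htb, Function.update_self, Function.update_self]
  have hshift : (a 0 - 1) + (b 0 + 1) = a 0 + b 0 := by omega
  rw [hshift]
  have hm : b 0 + 1 - 1 = (b 0 - 1) + 1 := by omega
  rw [hm, range_map_cons (a 0) (b 0 - 1) ha]
  rfl

lemma sum_update_succ {l : ℕ} (f : Fin (l+1) → ℕ) (v : ℕ) :
    (∑ i : Fin l, Function.update f 0 v i.succ) = ∑ i : Fin l, f i.succ :=
  Finset.sum_congr rfl fun t _ => Function.update_of_ne (Fin.succ_ne_zero t) v f

lemma exG (n : ℕ) : ∀ (J : List ℕ), List.Pairwise (· < ·) J →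
    (∀ x ∈ J, 1 ≤ x ∧ x + 1 ≤ n) →
    ∃ s : GString, (∀ t, 2 ≤ s.b t) ∧ ((∑ t, s.a t) + ∑ t, s.b t) = n ∧
      blockIdx (blocksOf s.l s.a s.b) = J
  | [], _, _ => ⟨⟨0, fun _ => n, Fin.elim0⟩, fun t => t.elim0, by simp, rfl⟩
  | j :: rest, hsort, hbd => by
      obtain ⟨hgt, hsort'⟩ := List.pairwise_cons.mp hsort
      obtain ⟨⟨l', a', b'⟩, hb', hsum', hidx'⟩ := exG n rest hsort'
        (fun x hx => hbd x (List.mem_cons_of_mem j hx))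
      dsimp only at hb' hsum' hidx'
      have hjb := hbd j (List.mem_cons_self)
      cases l' with
      | zero =>
          have hrest : rest = [] := hidx'.symm
          subst hrest
          refine ⟨⟨1, Fin.cons (j-1) (fun _ => n - (j+1)), fun _ => 2⟩,
            fun t => le_refl 2, ?_, ?_⟩
          · show ((∑ t : Fin 2, Fin.cons (j-1) (fun _ => n - (j+1)) t)
              + ∑ _t : Fin 1, (2:ℕ)) = n
            rw [Fin.sum_cons]
            simp only [Fin.sum_univ_one]
            omega
          · show blockIdx (blocksOf 1 (Fin.cons (j-1) (fun _ => n - (j+1)))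
              (fun _ => 2)) = [j]
            rw [blocksOf_succ, blockIdx]
            simp only [Fin.cons_zero]
            show (List.range (2-1)).map (fun t => (j-1) + 1 + t) ++ ([] : List ℕ) = [j]
            rw [List.append_nil]
            show [j - 1 + 1 + 0] = [j]
            have : j - 1 + 1 + 0 = j := by omega
            rw [this]
      | succ l'' =>
          have hfirst : a' 0 + 1 ∈ rest := by
            rw [← hidx', mem_blockIdx]
            refine ⟨0, ?_, ?_⟩
            · have := cOf_zero l'' a' b'
              omega
            · have := cOf_zero l'' a' b'
              have := hb' 0
              omega
          have hja : j < a' 0 + 1 := hgt _ hfirst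
          by_cases hA : a' 0 = j
          · refine ⟨⟨l''+1, Function.update a' 0 (a' 0 - 1),
              Function.update b' 0 (b' 0 + 1)⟩, ?_, ?_, ?_⟩
            · show ∀ t : Fin (l''+1), 2 ≤ Function.update b' 0 (b' 0 + 1) t
              intro t
              by_cases ht : t = 0
              · subst ht
                rw [Function.update_self]
                have := hb' 0
                omega
              · rw [Function.update_of_ne ht]
                exact hb' t
            · show ((∑ t, Function.update a' 0 (a' 0 - 1) t)
                + ∑ t, Function.update b' 0 (b' 0 + 1) t) = n
              have hsa := Fin.sum_univ_succ a'
              have hsb := Fin.sum_univ_succ b'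
              rw [Fin.sum_univ_succ (Function.update a' 0 (a' 0 - 1)),
                Fin.sum_univ_succ (Function.update b' 0 (b' 0 + 1)),
                Function.update_self, Function.update_self,
                sum_update_succ, sum_update_succ]
              omega
            · show blockIdx (blocksOf (l''+1) (Function.update a' 0 (a' 0 - 1))
                (Function.update b' 0 (b' 0 + 1))) = j :: rest
              rw [blockIdx_merge l'' a' b' (by omega) (by have := hb' 0; omega),
                hidx', hA]
          · have hja' : j + 1 ≤ a' 0 := by omega
            refine ⟨⟨l''+2, Fin.cons (j-1) (Function.update a' 0 (a' 0 - (j+1))),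
              Fin.cons 2 b'⟩, ?_, ?_, ?_⟩
            · show ∀ t : Fin (l''+2), 2 ≤ (Fin.cons 2 b' : Fin (l''+2) → ℕ) t
              intro t
              refine Fin.cases ?_ ?_ t
              · rw [Fin.cons_zero]
              · intro t'
                rw [Fin.cons_succ]
                exact hb' t'
            · show ((∑ t, Fin.cons (j-1) (Function.update a' 0 (a' 0 - (j+1))) t)
                + ∑ t, Fin.cons 2 b' t) = n
              have hsa := Fin.sum_univ_succ a'
              rw [Fin.sum_cons, Fin.sum_cons,
                Fin.sum_univ_succ (Function.update a' 0 (a' 0 - (j+1))),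
                Function.update_self, sum_update_succ]
              omega
            · show blockIdx (blocksOf (l''+2)
                (Fin.cons (j-1) (Function.update a' 0 (a' 0 - (j+1))))
                (Fin.cons 2 b')) = j :: rest
              rw [blocksOf_succ, blockIdx]
              simp only [Fin.cons_zero, Fin.cons_succ]
              have hX := blockIdx_ashift (l''+1) a'
                (Function.update a' 0 (a' 0 - (j+1))) b' (j+1)
                (by rw [Function.update_self]; omega)
                (fun t => (Function.update_of_ne (Fin.succ_ne_zero t) _ _).symm)
              have hrest : rest
                  = (blockIdx (blocksOf (l''+1)
                      (Function.update a' 0 (a' 0 - (j+1))) b')).map (· + (j+1)) := by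
                rw [← hidx', hX]
              rw [hrest]
              have hhead : (List.range (2-1)).map (fun t => (j-1) + 1 + t) = [j] := by
                show [j - 1 + 1 + 0] = [j]
                have : j - 1 + 1 + 0 = j := by omega
                rw [this]
              rw [blockIdx_map_shift, hhead, List.singleton_append]
              congr 1
              apply List.map_congr_left
              intro y _
              show y + ((j-1) + 2) = y + (j+1)
              omega

lemma toFinset_blockIdx (l : ℕ) (a : Fin (l+1) → ℕ) (b : Fin l → ℕ) :
    (blockIdx (blocksOf l a b)).toFinset
      = Finset.univ.biUnion (fun j : Fin l =>
          Finset.Ico (cOf l a b j + 1) (cOf l a b j + b j)) := by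
  ext x
  rw [List.mem_toFinset, mem_blockIdx]
  simp [Finset.mem_biUnion, Finset.mem_Ico]

lemma image_ofFn {k : ℕ} (i : Fin k → ℕ) :
    (List.ofFn i).toFinset = Finset.image i Finset.univ := by
  ext x
  rw [List.mem_toFinset, List.mem_ofFn]
  simp
theorem stmt14 (n k : ℕ) (hn : 2 ≤ n) (hk1 : 1 ≤ k) (hk2 : k ≤ n - 1) :
    (∀ s : GString, memSk n k s →
      ∀ i : Fin k → ℕ, StrictMono i →
        (Finset.image i Finset.univ = Finset.univ.biUnion (fun j : Fin s.l =>
          Finset.Ico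
            ((s.a 0 + ∑ t ∈ Finset.univ.filter (fun t => t < j), (s.b t + s.a t.succ)) + 1)
            ((s.a 0 + ∑ t ∈ Finset.univ.filter (fun t => t < j), (s.b t + s.a t.succ)) + s.b j))) →
        phi n s = Psi n k (fun t => e n (i t))) ∧
    {x : T n | ∃ s : GString, memSk n k s ∧ x = phi n s}
      = {x : T n | ∃ i : Fin k → ℕ, StrictMono i ∧ (∀ t, 1 ≤ i t ∧ i t ≤ n - 1)
          ∧ x = Psi n k (fun t => e n (i t))} := by
  constructor
  · intro s hs i hmono him
    exact part1 n k s hs i hmono him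
  · ext x
    simp only [Set.mem_setOf_eq]
    constructor
    · rintro ⟨s, hs, rfl⟩
      obtain ⟨hb2, hksum, htot⟩ := hs
      have hb1 : ∀ t, 1 ≤ s.b t := fun t => le_trans one_le_two (hb2 t)
      have hlenL : (blockIdx (blocksOf s.l s.a s.b)).length = k := by
        rw [blockIdx_length]; exact hksum
      set L := blockIdx (blocksOf s.l s.a s.b) with hL
      have hn' : lenOf s.l s.a s.b = n := by rw [lenOf_eq]; exact htot
      refine ⟨fun t => L.get (Fin.cast hlenL.symm t), ?_, ?_, ?_⟩
      · intro t1 t2 hlt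
        exact (blockIdx_sorted s.l s.a s.b hb1).rel_get_of_lt hlt
      · intro t
        show 1 ≤ L.get (Fin.cast hlenL.symm t) ∧ L.get (Fin.cast hlenL.symm t) ≤ n - 1
        have hmem : L.get (Fin.cast hlenL.symm t) ∈ L := List.get_mem L _
        have := blockIdx_bounds s.l s.a s.b hb1 _ hmem
        omega
      · have himage : Finset.image (fun t => L.get (Fin.cast hlenL.symm t))
            Finset.univ = L.toFinset := by
          ext y
          simp only [Finset.mem_image, List.mem_toFinset]
          constructor
          · rintro ⟨t, -, rfl⟩
            exact List.get_mem L _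
          · intro hy
            obtain ⟨idx, hidx⟩ := List.get_of_mem hy
            refine ⟨Fin.cast hlenL idx, Finset.mem_univ _, ?_⟩
            have hcast : Fin.cast hlenL.symm (Fin.cast hlenL idx) = idx := Fin.ext rfl
            rw [hcast]
            exact hidx
        have him : Finset.image (fun t => L.get (Fin.cast hlenL.symm t)) Finset.univ
            = Finset.univ.biUnion (fun j : Fin s.l =>
                Finset.Ico (cOf s.l s.a s.b j + 1) (cOf s.l s.a s.b j + s.b j)) := by
          rw [himage, hL, toFinset_blockIdx]
        exact part1 n k s ⟨hb2, hksum, htot⟩ _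
          (fun t1 t2 hlt => (blockIdx_sorted s.l s.a s.b hb1).rel_get_of_lt hlt) him
    · rintro ⟨i, hmono, hbnd, rfl⟩
      have hsorted : List.Pairwise (· < ·) (List.ofFn i) := (List.sortedLT_ofFn_iff.mpr hmono).pairwise
      have hbd : ∀ x ∈ List.ofFn i, 1 ≤ x ∧ x + 1 ≤ n := by
        intro x hx
        rw [List.mem_ofFn] at hx
        obtain ⟨t, rfl⟩ := hx
        have := hbnd t
        omega
      obtain ⟨s, hb2, hsum, hidx⟩ := exG n (List.ofFn i) hsorted hbd
      have hklen : (∑ t, (s.b t - 1)) = k := by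
        rw [← blockIdx_length s.l s.a s.b, hidx, List.length_ofFn]
      refine ⟨s, ⟨hb2, hklen, hsum⟩, ?_⟩
      have him : Finset.image i Finset.univ = Finset.univ.biUnion (fun j : Fin s.l =>
          Finset.Ico (cOf s.l s.a s.b j + 1) (cOf s.l s.a s.b j + s.b j)) := by
        rw [← image_ofFn, ← hidx, toFinset_blockIdx]
      exact (part1 n k s ⟨hb2, hklen, hsum⟩ i hmono him).symm

end
end

section
/- Let b ≥ 2. For every t with 1 ≤ t ≤ b−1, one has Φ_t(Θ_b) = −q⁻¹ · Θ_b in T_b. (A crossing applied inside a block vector multiplies it by −q⁻¹.) -/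
open scoped BigOperators

set_option maxHeartbeats 1000000
set_option synthInstance.maxHeartbeats 400000

noncomputable section

/-- The string with a single `0` at position `r`. -/
def Bstr (n : ℕ) (r : Fin n) : Fin n → Fin 2 := fun k => if k = r then 0 else 1

/-- The coefficient of `v (Bstr n r)` in `Theta n`. -/
def coefc (n : ℕ) (r : Fin n) : K := (-1 : K) ^ (r : ℕ) * q⁻¹ ^ (n - 1 - (r : ℕ))

lemma theta_eq (n : ℕ) : Theta n = ∑ r : Fin n, coefc n r • v n (Bstr n r) := rfl

lemma upd_pair_eq_iff {n : ℕ} {i j : Fin n} (hij : i ≠ j) (β α : Fin n → Fin 2)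
    (a c : Fin 2) :
    Function.update (Function.update β i a) j c = α ↔
      a = α i ∧ c = α j ∧ ∀ k, k ≠ i → k ≠ j → β k = α k := by
  constructor
  · intro h
    refine ⟨?_, ?_, ?_⟩
    · have := congrFun h i
      simpa [Function.update_of_ne hij] using this
    · have := congrFun h j
      simpa using this
    · intro k hki hkj
      have := congrFun h k
      simpa [Function.update_of_ne hkj, Function.update_of_ne hki] using this
  · rintro ⟨h1, h2, h3⟩
    funext k
    by_cases hkj : k = j
    · subst hkj; simpa using h2
    · by_cases hki : k = i
      · subst hki
        simpa [Function.update_of_ne hij] using h1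
      · simp [Function.update_of_ne hkj, Function.update_of_ne hki, h3 k hki hkj]

lemma phiaux_basis {n : ℕ} (i j : Fin n) (hij : i ≠ j) (α : Fin n → Fin 2) :
    PhiAux n i j (v n α) = ∑ out : Fin 2 × Fin 2,
      Rmat out (α i, α j) • v n (Function.update (Function.update α i out.1) j out.2) := by
  funext β
  show (∑ p : Fin 2 × Fin 2,
      Rmat (β i, β j) p * v n α (Function.update (Function.update β i p.1) j p.2)) = _
  rw [Finset.sum_apply]
  simp only [Pi.smul_apply, smul_eq_mul, v]
  have L : (∑ p : Fin 2 × Fin 2, Rmat (β i, β j) p *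
        (if Function.update (Function.update β i p.1) j p.2 = α then (1 : K) else 0))
      = Rmat (β i, β j) (α i, α j) *
        (if (∀ k, k ≠ i → k ≠ j → β k = α k) then (1 : K) else 0) := by
    rw [Finset.sum_eq_single ((α i, α j) : Fin 2 × Fin 2)]
    · simp [upd_pair_eq_iff hij]
    · intro p _ hp
      by_cases h : Function.update (Function.update β i p.1) j p.2 = α
      · exfalso
        rw [upd_pair_eq_iff hij] at h
        exact hp (Prod.ext h.1 h.2.1)
      · simp [h]
    · intro h; exact absurd (Finset.mem_univ _) h
  have R : (∑ out : Fin 2 × Fin 2, Rmat out (α i, α j) *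
        (if β = Function.update (Function.update α i out.1) j out.2 then (1 : K) else 0))
      = Rmat (β i, β j) (α i, α j) *
        (if (∀ k, k ≠ i → k ≠ j → β k = α k) then (1 : K) else 0) := by
    rw [Finset.sum_eq_single ((β i, β j) : Fin 2 × Fin 2)]
    · congr 1
      refine if_congr ?_ rfl rfl
      rw [eq_comm, upd_pair_eq_iff hij]
      constructor
      · rintro ⟨_, _, h3⟩ k hki hkj
        exact (h3 k hki hkj).symm
      · intro h
        exact ⟨rfl, rfl, fun k hki hkj => (h k hki hkj).symm⟩
    · intro p _ hp
      by_cases h : β = Function.update (Function.update α i p.1) j p.2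
      · exfalso
        rw [eq_comm, upd_pair_eq_iff hij] at h
        exact hp (Prod.ext h.1 h.2.1)
      · simp [h]
    · intro h; exact absurd (Finset.mem_univ _) h
  rw [L, R]

lemma sum_out11 {n : ℕ} (g : Fin 2 × Fin 2 → T n) :
    (∑ out : Fin 2 × Fin 2, Rmat out (1, 1) • g out) = (-q⁻¹) • g (1, 1) := by
  simp (config := { decide := true }) [Fintype.sum_prod_type, Fin.sum_univ_two, Rmat]

lemma sum_out01 {n : ℕ} (g : Fin 2 × Fin 2 → T n) :
    (∑ out : Fin 2 × Fin 2, Rmat out (0, 1) • g out)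
      = (q - q⁻¹) • g (0, 1) + g (1, 0) := by
  simp (config := { decide := true }) [Fintype.sum_prod_type, Fin.sum_univ_two, Rmat]

lemma sum_out10 {n : ℕ} (g : Fin 2 × Fin 2 → T n) :
    (∑ out : Fin 2 × Fin 2, Rmat out (1, 0) • g out) = g (0, 1) := by
  simp (config := { decide := true }) [Fintype.sum_prod_type, Fin.sum_univ_two, Rmat]

theorem stmt15 (b t : ℕ) (hb : 2 ≤ b) (ht1 : 1 ≤ t) (ht2 : t ≤ b - 1) :
    Phi b t (Theta b) = -q⁻¹ • Theta b := by
  have htb : t < b := by omega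
  have hq : q ≠ 0 := RatFunc.X_ne_zero
  have hPhi : Phi b t = PhiAux b ⟨t - 1, by omega⟩ ⟨t, htb⟩ := by
    rw [Phi, dif_pos (⟨ht1, htb⟩ : 0 < t ∧ t < b)]
  set i : Fin b := ⟨t - 1, by omega⟩ with hi
  set j : Fin b := ⟨t, htb⟩ with hj
  have hij : i ≠ j := by
    simp only [hi, hj, ne_eq, Fin.mk.injEq]
    omega
  rw [hPhi, theta_eq, map_sum, Finset.smul_sum]
  simp only [map_smul, phiaux_basis i j hij]
  rw [← Finset.sum_compl_add_sum ({i, j} : Finset (Fin b)),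
    ← Finset.sum_compl_add_sum ({i, j} : Finset (Fin b))
      (f := fun r => (-q⁻¹ : K) • (coefc b r • v b (Bstr b r)))]
  congr 1
  · refine Finset.sum_congr rfl fun r hr => ?_
    rw [Finset.mem_compl, Finset.mem_insert, Finset.mem_singleton] at hr
    push_neg at hr
    obtain ⟨hri, hrj⟩ := hr
    have h1 : Bstr b r i = 1 := if_neg (Ne.symm hri)
    have h2 : Bstr b r j = 1 := if_neg (Ne.symm hrj)
    simp only [h1, h2]
    rw [sum_out11]
    have hupd : Function.update (Function.update (Bstr b r) i 1) j 1 = Bstr b r := by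
      funext k
      simp only [Function.update_apply, Bstr]
      split_ifs <;> simp_all
    rw [hupd]
    exact smul_comm _ _ _
  · rw [Finset.sum_pair hij, Finset.sum_pair hij]
    obtain ⟨s, hs⟩ : ∃ s, t = s + 1 := ⟨t - 1, by omega⟩
    obtain ⟨m, hm⟩ : ∃ m, b - 1 - t = m := ⟨_, rfl⟩
    have hvi : (i : ℕ) = s := by simp [hi, hs]
    have hvj : (j : ℕ) = t := rfl
    have ci : coefc b i = (-1 : K) ^ s * q⁻¹ ^ (m + 1) := by
      show (-1 : K) ^ ((i : Fin b) : ℕ) * q⁻¹ ^ (b - 1 - ((i : Fin b) : ℕ)) = _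
      rw [hvi, show b - 1 - s = m + 1 from by omega]
    have cj : coefc b j = (-1 : K) ^ (s + 1) * q⁻¹ ^ m := by
      show (-1 : K) ^ ((j : Fin b) : ℕ) * q⁻¹ ^ (b - 1 - ((j : Fin b) : ℕ)) = _
      rw [hvj, hs, show b - 1 - (s + 1) = m from by omega]
    have hA : coefc b i * (q - q⁻¹) + coefc b j = -q⁻¹ * coefc b i := by
      have h1 : q⁻¹ * q = 1 := inv_mul_cancel₀ hq
      rw [ci, cj]
      linear_combination ((-1 : K) ^ s * q⁻¹ ^ m) * h1
    have hB : coefc b i = -q⁻¹ * coefc b j := by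
      rw [ci, cj]; ring
    have hBii : Bstr b i i = 0 := if_pos rfl
    have hBij : Bstr b i j = 1 := if_neg (Ne.symm hij)
    have hBjj : Bstr b j j = 0 := if_pos rfl
    have hBji : Bstr b j i = 1 := if_neg hij
    simp only [hBii, hBij, hBjj, hBji]
    rw [sum_out01, sum_out10]
    have L2 : Function.update (Function.update (Bstr b i) i 1) j 0 = Bstr b j := by
      funext k
      simp only [Function.update_apply, Bstr]
      split_ifs <;> simp_all
    have L3 : Function.update (Function.update (Bstr b i) i 0) j 1 = Bstr b i := by
      funext k
      simp only [Function.update_apply, Bstr]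
      split_ifs <;> simp_all
    have L4 : Function.update (Function.update (Bstr b j) i 0) j 1 = Bstr b i := by
      funext k
      simp only [Function.update_apply, Bstr]
      split_ifs <;> simp_all
    rw [L2, L3, L4]
    funext γ
    simp only [Pi.add_apply, Pi.smul_apply, smul_eq_mul]
    linear_combination (v b (Bstr b i) γ) * hA + (v b (Bstr b j) γ) * hB

end
end

section
/- Let b ≥ 2. In T_{b+1}, under the identification of T_1 ⊗ T_b and T_2 ⊗ T_{b−1} with T_{b+1} by concatenation, one has Φ_1(v₀ ⊗ Θ_b) = q · (v₀ ⊗ Θ_b) + Θ_2 ⊗ Θ_{b−1}. (A crossing applied at the left edge of a block.) -/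
open scoped BigOperators

set_option maxHeartbeats 1000000
set_option synthInstance.maxHeartbeats 400000

noncomputable section

lemma theta_apply (b : ℕ) (α : Fin b → Fin 2) :
    Theta b α = ∑ r : Fin b, (-1 : K) ^ (r : ℕ) * q⁻¹ ^ (b - 1 - (r : ℕ)) *
      (if α = (fun i => if i = r then 0 else 1) then 1 else 0) := by
  simp only [Theta, Finset.sum_apply, Pi.smul_apply, v, smul_eq_mul]

lemma theta_cons_one (c : ℕ) (α : Fin (c + 1) → Fin 2) (h0 : α 0 = 1) :
    Theta (c + 1) α = - Theta c (fun i => α i.succ) := by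
  rw [theta_apply, theta_apply, Fin.sum_univ_succ]
  have hz : α ≠ (fun i => if i = (0 : Fin (c + 1)) then 0 else 1) := by
    intro h
    have := congrFun h 0
    simp [h0] at this
  rw [if_neg hz]
  simp only [Fin.val_zero, pow_zero, one_mul, mul_zero, zero_add, ← Finset.sum_neg_distrib]
  refine Finset.sum_congr rfl fun i _ => ?_
  have hiff : (α = fun j => if j = (i.succ : Fin (c + 1)) then 0 else 1) ↔
      ((fun j : Fin c => α j.succ) = fun j => if j = i then 0 else 1) := by
    constructor
    · intro h
      funext j
      rw [congrFun h j.succ]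
      simp [Fin.succ_inj]
    · intro h
      funext j
      refine Fin.cases ?_ (fun k => ?_) j
      · simpa [(Fin.succ_ne_zero i).symm] using h0
      · rw [congrFun h k]
        simp [Fin.succ_inj]
  have hexp : c + 1 - 1 - ((i.succ : Fin (c + 1)) : ℕ) = c - 1 - (i : ℕ) := by
    simp [Fin.val_succ]; omega
  rw [hexp, Fin.val_succ]
  simp only [hiff]
  by_cases h : (fun j : Fin c => α j.succ) = fun j => if j = i then 0 else 1 <;>
    simp [h, pow_succ]

lemma theta_cons_zero (c : ℕ) (α : Fin (c + 1) → Fin 2) (h0 : α 0 = 0) :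
    Theta (c + 1) α = q⁻¹ ^ c *
      (if (fun i : Fin c => α i.succ) = (fun _ => 1) then 1 else 0) := by
  rw [theta_apply, Fin.sum_univ_succ]
  have hz : ∀ i : Fin c, α ≠ (fun j => if j = (i.succ : Fin (c+1)) then 0 else 1) := by
    intro i h
    have := congrFun h 0
    simp [h0, (Fin.succ_ne_zero i).symm] at this
  have hsum : ∑ i : Fin c, (-1 : K) ^ ((i.succ : Fin (c+1)) : ℕ)
      * q⁻¹ ^ (c + 1 - 1 - ((i.succ : Fin (c+1)) : ℕ)) *
      (if α = (fun j => if j = (i.succ : Fin (c+1)) then 0 else 1) then 1 else 0) = 0 := by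
    refine Finset.sum_eq_zero fun i _ => by rw [if_neg (hz i)]; ring
  rw [hsum]
  have hiff : (α = fun j : Fin (c+1) => if j = 0 then 0 else 1) ↔
      ((fun j : Fin c => α j.succ) = fun _ => 1) := by
    constructor
    · intro h
      funext j
      rw [congrFun h j.succ]
      simp [Fin.succ_ne_zero]
    · intro h
      funext j
      refine Fin.cases ?_ (fun k => ?_) j
      · simpa using h0
      · rw [congrFun h k]
        simp [Fin.succ_ne_zero]
  simp only [hiff]
  norm_num


lemma theta_cons_one' (c : ℕ) (ρ : Fin (c + 1) → Fin 2) :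
    Theta (c + 2) (Fin.cons 1 ρ) = - Theta (c + 1) ρ := by
  have h2 : (fun i : Fin (c + 1) => (Fin.cons (1 : Fin 2) ρ : Fin (c+1+1) → Fin 2) i.succ) = ρ := by
    funext i; simp
  calc Theta (c + 2) (Fin.cons 1 ρ)
      = - Theta (c + 1) (fun i => (Fin.cons (1 : Fin 2) ρ : Fin (c+1+1) → Fin 2) i.succ) :=
        theta_cons_one (c + 1) _ (by simp)
    _ = - Theta (c + 1) ρ := by rw [h2]

lemma theta_cons_zero' (c : ℕ) (ρ : Fin (c + 1) → Fin 2) :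
    Theta (c + 2) (Fin.cons 0 ρ) = q⁻¹ ^ (c + 1) *
      (if ρ = (fun _ => 1) then 1 else 0) := by
  have h2 : (fun i : Fin (c + 1) => (Fin.cons (0 : Fin 2) ρ : Fin (c+1+1) → Fin 2) i.succ) = ρ := by
    funext i; simp
  have h := theta_cons_zero (c + 1) (Fin.cons 0 ρ) (by simp)
  simp only [h2] at h
  exact h

lemma theta_two (α : Fin 2 → Fin 2) :
    Theta 2 α = q⁻¹ * (if α 0 = 0 ∧ α 1 = 1 then 1 else 0)
      - (if α 0 = 1 ∧ α 1 = 0 then 1 else 0) := by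
  rw [theta_apply, Fin.sum_univ_two]
  have e0 : (α = fun i => if i = (0 : Fin 2) then 0 else 1) ↔ (α 0 = 0 ∧ α 1 = 1) := by
    rw [funext_iff, Fin.forall_fin_two]
    simp
  have e1 : (α = fun i => if i = (1 : Fin 2) then 0 else 1) ↔ (α 0 = 1 ∧ α 1 = 0) := by
    rw [funext_iff, Fin.forall_fin_two]
    simp
  simp only [e0, e1, Fin.val_zero, Fin.val_one]
  norm_num
  split_ifs <;> ring

theorem stmt16 (b : ℕ) (hb : 2 ≤ b) :
    Phi (1 + b) 1 (conc (v0 1) (Theta b))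
      = q • conc (v0 1) (Theta b)
        + castT (by omega : 2 + (b - 1) = 1 + b) (conc (Theta 2) (Theta (b - 1))) := by
  obtain ⟨c, rfl⟩ : ∃ c, b = c + 2 := ⟨b - 2, by omega⟩
  funext γ
  simp only [Phi, dif_pos (by omega : 0 < 1 ∧ 1 < 1 + (c + 2)), PhiAux, LinearMap.coe_mk,
    AddHom.coe_mk, Pi.add_apply, Pi.smul_apply, smul_eq_mul, conc, castT, v0, v,
    Fintype.sum_prod_type, Fin.sum_univ_two, Nat.sub_self]
  have hlt0 : (0 : ℕ) < 1 + (c + 2) := by omega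
  have hlt1 : (1 : ℕ) < 1 + (c + 2) := by omega
  set ρ : Fin (c + 1) → Fin 2 := fun i => γ (Fin.natAdd 1 i.succ) with hρ
  have hupd : ∀ x y : Fin 2,
      (fun i : Fin (c + 2) =>
        Function.update (Function.update γ ⟨0, hlt0⟩ x) ⟨1, hlt1⟩ y (Fin.natAdd 1 i))
      = Fin.cons y ρ := by
    intro x y
    funext i
    refine Fin.cases ?_ (fun j => ?_) i
    · have e : Fin.natAdd 1 (0 : Fin (c + 2)) = (⟨1, hlt1⟩ : Fin (1 + (c + 2))) := by
        ext; simp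
      rw [e, Function.update_self]
      simp
    · have h1 : Fin.natAdd 1 j.succ ≠ (⟨1, hlt1⟩ : Fin (1 + (c + 2))) := by
        simp only [Ne, Fin.ext_iff, Fin.val_natAdd, Fin.val_succ, Fin.val_mk]; omega
      have h0 : Fin.natAdd 1 j.succ ≠ (⟨0, hlt0⟩ : Fin (1 + (c + 2))) := by
        simp only [Ne, Fin.ext_iff, Fin.val_natAdd, Fin.val_succ, Fin.val_mk]; omega
      rw [Function.update_of_ne h1, Function.update_of_ne h0]
      simp [hρ]
  have ecast : Fin.castAdd (c + 2) (0 : Fin 1) = (⟨0, hlt0⟩ : Fin (1 + (c + 2))) := by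
    ext; simp
  have hfirst : ∀ x y : Fin 2,
      Function.update (Function.update γ ⟨0, hlt0⟩ x) ⟨1, hlt1⟩ y
        (Fin.castAdd (c + 2) (0 : Fin 1)) = x := by
    intro x y
    rw [ecast, Function.update_of_ne (by simp [Fin.ext_iff]), Function.update_self]
  have hR2 : (fun i : Fin (c + 2) => γ (Fin.natAdd 1 i)) = Fin.cons (γ ⟨1, hlt1⟩) ρ := by
    funext i
    refine Fin.cases ?_ (fun j => ?_) i
    · have e : Fin.natAdd 1 (0 : Fin (c + 2)) = (⟨1, hlt1⟩ : Fin (1 + (c + 2))) := by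
        ext; simp
      rw [e]; simp
    · simp [hρ]
  have hR3 : (fun i : Fin (c + 2 - 1) =>
      γ (Fin.cast (by omega : 2 + (c + 2 - 1) = 1 + (c + 2)) (Fin.natAdd 2 i))) = ρ := by
    funext i
    simp only [hρ]
    congr 1
    ext
    simp
    omega
  have g0 : γ (Fin.cast (by omega : 2 + (c + 2 - 1) = 1 + (c + 2))
      (Fin.castAdd (c + 2 - 1) (0 : Fin 2))) = γ ⟨0, hlt0⟩ :=
    congrArg γ (Fin.ext (by simp))
  have g1 : γ (Fin.cast (by omega : 2 + (c + 2 - 1) = 1 + (c + 2))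
      (Fin.castAdd (c + 2 - 1) (1 : Fin 2))) = γ ⟨1, hlt1⟩ :=
    congrArg γ (Fin.ext (by simp))
  simp only [hupd, hR2, hR3, theta_two, g0, g1]
  simp only [funext_iff, Fin.forall_fin_one]
  simp only [hfirst, ecast]
  rw [show Theta (c + 2 - 1) ρ = Theta (c + 1) ρ from rfl]
  have two : ∀ x : Fin 2, x = 0 ∨ x = 1 := by decide
  obtain h0 | h0 := two (γ ⟨0, hlt0⟩) <;> obtain h1 | h1 := two (γ ⟨1, hlt1⟩) <;>
    simp only [h0, h1, theta_cons_one', theta_cons_zero', Rmat] <;>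
    simp [Prod.ext_iff] <;> (try ring)

end
end

section
/- Let b ≥ 2 and c ≥ 2. In T_{b+c}, under the identification of T_a ⊗ T_{a'} with T_{a+a'} by concatenation, one has Φ_b(Θ_b ⊗ Θ_c) = q · (Θ_b ⊗ Θ_c) + Θ_{b+1} ⊗ Θ_{c−1} + Θ_{b−1} ⊗ Θ_{c+1}. (A crossing applied at the junction of two adjacent blocks.) -/
open scoped BigOperators

set_option maxHeartbeats 1000000
set_option synthInstance.maxHeartbeats 400000

noncomputable section

-- ===== auxiliary development =====

lemma q_ne : (q : K) ≠ 0 := RatFunc.X_ne_zero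

lemma qq : q * q⁻¹ = 1 := mul_inv_cancel₀ q_ne

/-- string with zeros at (nat) positions x and y, ones elsewhere -/
def st (n x y : ℕ) : Fin n → Fin 2 := fun k => if (k : ℕ) = x ∨ (k : ℕ) = y then 0 else 1

def Cf (b c' r s : ℕ) : K := ((-1 : K) ^ r * q⁻¹ ^ (b - 1 - r)) * ((-1 : K) ^ s * q⁻¹ ^ (c' - 1 - s))

lemma theta_expand (b : ℕ) :
    Theta b = ∑ r ∈ Finset.range b, ((-1 : K) ^ r * q⁻¹ ^ (b - 1 - r)) •
      v b (fun i => if (i : ℕ) = r then 0 else 1) := by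
  rw [Theta]
  have h : ∀ r : Fin b, (fun i => if i = r then (0 : Fin 2) else 1)
      = fun i : Fin b => if (i : ℕ) = (r : ℕ) then (0 : Fin 2) else 1 := by
    intro r; funext i; simp [Fin.ext_iff]
  have := Fin.sum_univ_eq_sum_range
    (fun r : ℕ => ((-1 : K) ^ r * q⁻¹ ^ (b - 1 - r)) • v b (fun i : Fin b => if (i : ℕ) = r then (0 : Fin 2) else 1)) b
  rw [← this]
  exact Finset.sum_congr rfl fun r _ => by rw [h r]
lemma conc_theta_cast (a c' n : ℕ) (h : a + c' = n) :
    castT h (conc (Theta a) (Theta c')) =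
      ∑ r ∈ Finset.range a, ∑ s ∈ Finset.range c', Cf a c' r s • v n (st n r (a + s)) := by
  funext γ
  simp only [castT, conc, theta_expand]
  simp only [Finset.sum_apply, Pi.smul_apply, v, smul_eq_mul, mul_ite, mul_one, mul_zero]
  rw [Finset.sum_mul_sum]
  refine Finset.sum_congr rfl fun r hr => Finset.sum_congr rfl fun s hs => ?_
  rw [Finset.mem_range] at hr hs
  have key : ((fun i => γ (Fin.cast h (Fin.castAdd c' i))) = (fun i : Fin a => if (i : ℕ) = r then (0 : Fin 2) else 1)
      ∧ (fun i => γ (Fin.cast h (Fin.natAdd a i))) = (fun i : Fin c' => if (i : ℕ) = s then (0 : Fin 2) else 1))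
      ↔ γ = st n r (a + s) := by
    constructor
    · rintro ⟨h1, h2⟩
      funext k
      rcases Nat.lt_or_ge (k : ℕ) a with hk | hk
      · have e : Fin.cast h (Fin.castAdd c' ⟨(k : ℕ), hk⟩) = k := by
          apply Fin.ext; simp
        have h3 := congrFun h1 ⟨(k : ℕ), hk⟩
        rw [e] at h3
        rw [h3, st]
        simp only
        have hne : ¬ ((k : ℕ) = a + s) := by omega
        by_cases hkr : (k : ℕ) = r <;> simp [hkr, hne]
      · have hk2 : (k : ℕ) - a < c' := by
          have := k.isLt; omega
        have e : Fin.cast h (Fin.natAdd a ⟨(k : ℕ) - a, hk2⟩) = k := by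
          apply Fin.ext; simp; omega
        have h3 := congrFun h2 ⟨(k : ℕ) - a, hk2⟩
        rw [e] at h3
        rw [h3, st]
        simp only
        have hne : ¬ ((k : ℕ) = r) := by omega
        by_cases hks : (k : ℕ) - a = s
        · have h4 : (k : ℕ) = a + s := by omega
          simp [hks, h4, hne]
        · have h4 : ¬ ((k : ℕ) = a + s) := by omega
          simp [hks, h4, hne]
    · rintro rfl
      constructor
      · funext i
        simp only [st, Fin.coe_cast, Fin.coe_castAdd]
        have h4 : ¬ ((i : ℕ) = a + s) := by have := i.isLt; omega
        by_cases hir : (i : ℕ) = r <;> simp [hir, h4]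
      · funext i
        simp only [st, Fin.coe_cast, Fin.coe_natAdd]
        have h4 : ¬ (a + (i : ℕ) = r) := by omega
        by_cases his : (i : ℕ) = s
        · have h5 : a + (i : ℕ) = a + s := by omega
          simp [his, h5]
        · have h5 : ¬ (a + (i : ℕ) = a + s) := by omega
          simp [his, h4, h5]
  rw [and_comm] at key
  simp only [ite_mul, mul_ite, zero_mul, mul_zero, ← ite_and, key, Cf]
lemma phiAux_v (n : ℕ) (i j : Fin n) (hij : i ≠ j) (α : Fin n → Fin 2) :
    PhiAux n i j (v n α) = ∑ p : Fin 2 × Fin 2,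
      Rmat p (α i, α j) • v n (Function.update (Function.update α i p.1) j p.2) := by
  funext β
  have hji : j ≠ i := hij.symm
  simp only [PhiAux, LinearMap.coe_mk, AddHom.coe_mk, Finset.sum_apply, Pi.smul_apply,
    smul_eq_mul, v]
  trans (if (∀ k, k ≠ i → k ≠ j → β k = α k) then Rmat (β i, β j) (α i, α j) else 0)
  · rw [Finset.sum_eq_single ((α i, α j))]
    · have hiff : (Function.update (Function.update β i (α i)) j (α j) = α)
          ↔ (∀ k, k ≠ i → k ≠ j → β k = α k) := by
        constructor
        · intro hh k hk1 hk2
          have h3 := congrFun hh k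
          rwa [Function.update_of_ne hk2, Function.update_of_ne hk1] at h3
        · intro hh
          funext k
          by_cases hk2 : k = j
          · subst hk2; rw [Function.update_self]
          · rw [Function.update_of_ne hk2]
            by_cases hk1 : k = i
            · subst hk1; rw [Function.update_self]
            · rw [Function.update_of_ne hk1]; exact hh k hk1 hk2
      by_cases hP : (∀ k, k ≠ i → k ≠ j → β k = α k) <;>
        simp [hiff, hP]
    · intro p _ hp
      have hne : Function.update (Function.update β i p.1) j p.2 ≠ α := by
        intro hh
        apply hp
        have h1 := congrFun hh i
        have h2 := congrFun hh j
        rw [Function.update_of_ne hij, Function.update_self] at h1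
        rw [Function.update_self] at h2
        rw [Prod.ext_iff]
        exact ⟨h1, h2⟩
      rw [if_neg hne, mul_zero]
    · intro hmem; exact absurd (Finset.mem_univ _) hmem
  · symm
    rw [Finset.sum_eq_single ((β i, β j))]
    · have hiff : (β = Function.update (Function.update α i (β i)) j (β j))
          ↔ (∀ k, k ≠ i → k ≠ j → β k = α k) := by
        constructor
        · intro hh k hk1 hk2
          have h3 := congrFun hh k
          rwa [Function.update_of_ne hk2, Function.update_of_ne hk1] at h3
        · intro hh
          funext k
          by_cases hk2 : k = j
          · subst hk2; rw [Function.update_self]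
          · rw [Function.update_of_ne hk2]
            by_cases hk1 : k = i
            · subst hk1; rw [Function.update_self]
            · rw [Function.update_of_ne hk1]; exact (hh k hk1 hk2)
      by_cases hP : (∀ k, k ≠ i → k ≠ j → β k = α k) <;>
        simp [hiff, hP]
    · intro p _ hp
      have hne : β ≠ Function.update (Function.update α i p.1) j p.2 := by
        intro hh
        apply hp
        have h1 := congrFun hh i
        have h2 := congrFun hh j
        rw [Function.update_of_ne hij, Function.update_self] at h1
        rw [Function.update_self] at h2
        rw [Prod.ext_iff]
        exact ⟨h1.symm, h2.symm⟩
      rw [if_neg hne, mul_zero]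
    · intro hmem; exact absurd (Finset.mem_univ _) hmem
lemma update2_st (n x y x' y' : ℕ) (i j : Fin n) (p1 p2 : Fin 2)
    (hpi : p1 = if (i : ℕ) = x' ∨ (i : ℕ) = y' then 0 else 1)
    (hpj : p2 = if (j : ℕ) = x' ∨ (j : ℕ) = y' then 0 else 1)
    (hoff : ∀ k : ℕ, k ≠ (i : ℕ) → k ≠ (j : ℕ) → ((k = x ∨ k = y) ↔ (k = x' ∨ k = y'))) :
    Function.update (Function.update (st n x y) i p1) j p2 = st n x' y' := by
  funext k
  by_cases hk2 : k = j
  · subst hk2; rw [Function.update_self, hpj]; rfl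
  · rw [Function.update_of_ne hk2]
    by_cases hk1 : k = i
    · subst hk1; rw [Function.update_self, hpi]; rfl
    · rw [Function.update_of_ne hk1]
      have hk1' : (k : ℕ) ≠ (i : ℕ) := fun hh => hk1 (Fin.ext hh)
      have hk2' : (k : ℕ) ≠ (j : ℕ) := fun hh => hk2 (Fin.ext hh)
      show (if (k : ℕ) = x ∨ (k : ℕ) = y then (0 : Fin 2) else 1)
        = (if (k : ℕ) = x' ∨ (k : ℕ) = y' then 0 else 1)
      simp only [hoff (k : ℕ) hk1' hk2']

lemma phi_case00 (n t : ℕ) (h1 : 0 < t) (h2 : t < n) :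
    Phi n t (v n (st n (t - 1) t)) = q • v n (st n (t - 1) t) := by
  rw [Phi, dif_pos ⟨h1, h2⟩]
  have hij : (⟨t - 1, by omega⟩ : Fin n) ≠ ⟨t, h2⟩ := by
    simp only [ne_eq, Fin.mk.injEq]; omega
  rw [phiAux_v n _ _ hij]
  have hαi : st n (t - 1) t ⟨t - 1, by omega⟩ = 0 := by
    show (if t - 1 = t - 1 ∨ t - 1 = t then (0 : Fin 2) else 1) = 0
    rw [if_pos (Or.inl rfl)]
  have hαj : st n (t - 1) t ⟨t, h2⟩ = 0 := by
    show (if t = t - 1 ∨ t = t then (0 : Fin 2) else 1) = 0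
    rw [if_pos (Or.inr rfl)]
  rw [hαi, hαj]
  rw [Fintype.sum_prod_type]
  simp only [Fin.sum_univ_two]
  rw [update2_st n (t - 1) t (t - 1) t ⟨t - 1, by omega⟩ ⟨t, h2⟩ 0 0
    (by rw [if_pos (Or.inl rfl)]) (by rw [if_pos (Or.inr rfl)])
    (fun k _ _ => Iff.rfl)]
  simp (config := { decide := true }) [Rmat]

lemma phi_case11 (n t x y : ℕ) (h1 : 0 < t) (h2 : t < n)
    (hx1 : x ≠ t - 1) (hx2 : x ≠ t) (hy1 : y ≠ t - 1) (hy2 : y ≠ t) :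
    Phi n t (v n (st n x y)) = (-q⁻¹) • v n (st n x y) := by
  rw [Phi, dif_pos ⟨h1, h2⟩]
  have hij : (⟨t - 1, by omega⟩ : Fin n) ≠ ⟨t, h2⟩ := by
    simp only [ne_eq, Fin.mk.injEq]; omega
  rw [phiAux_v n _ _ hij]
  have hαi : st n x y ⟨t - 1, by omega⟩ = 1 := by
    show (if t - 1 = x ∨ t - 1 = y then (0 : Fin 2) else 1) = 1
    rw [if_neg (by omega)]
  have hαj : st n x y ⟨t, h2⟩ = 1 := by
    show (if t = x ∨ t = y then (0 : Fin 2) else 1) = 1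
    rw [if_neg (by omega)]
  rw [hαi, hαj]
  rw [Fintype.sum_prod_type]
  simp only [Fin.sum_univ_two]
  rw [update2_st n x y x y ⟨t - 1, by omega⟩ ⟨t, h2⟩ 1 1
    (by show (1 : Fin 2) = if t - 1 = x ∨ t - 1 = y then 0 else 1; rw [if_neg (by omega)])
    (by show (1 : Fin 2) = if t = x ∨ t = y then 0 else 1; rw [if_neg (by omega)])
    (fun k _ _ => Iff.rfl)]
  simp (config := { decide := true }) [Rmat]

lemma phi_case10 (n t x : ℕ) (h1 : 0 < t) (h2 : t < n)
    (hx1 : x ≠ t - 1) (hx2 : x ≠ t) :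
    Phi n t (v n (st n x t)) = v n (st n x (t - 1)) := by
  rw [Phi, dif_pos ⟨h1, h2⟩]
  have hij : (⟨t - 1, by omega⟩ : Fin n) ≠ ⟨t, h2⟩ := by
    simp only [ne_eq, Fin.mk.injEq]; omega
  rw [phiAux_v n _ _ hij]
  have hαi : st n x t ⟨t - 1, by omega⟩ = 1 := by
    show (if t - 1 = x ∨ t - 1 = t then (0 : Fin 2) else 1) = 1
    rw [if_neg (by omega)]
  have hαj : st n x t ⟨t, h2⟩ = 0 := by
    show (if t = x ∨ t = t then (0 : Fin 2) else 1) = 0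
    rw [if_pos (Or.inr rfl)]
  rw [hαi, hαj]
  rw [Fintype.sum_prod_type]
  simp only [Fin.sum_univ_two]
  rw [update2_st n x t x (t - 1) ⟨t - 1, by omega⟩ ⟨t, h2⟩ 0 1
    (by show (0 : Fin 2) = if t - 1 = x ∨ t - 1 = t - 1 then 0 else 1; rw [if_pos (Or.inr rfl)])
    (by show (1 : Fin 2) = if t = x ∨ t = t - 1 then 0 else 1; rw [if_neg (by omega)])
    (fun k hk1 hk2 => by
      have h1' : k ≠ t - 1 := hk1
      have h2' : k ≠ t := hk2
      omega)]
  simp (config := { decide := true }) [Rmat]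

lemma phi_case01 (n t y : ℕ) (h1 : 0 < t) (h2 : t < n)
    (hy1 : y ≠ t - 1) (hy2 : y ≠ t) :
    Phi n t (v n (st n (t - 1) y))
      = (q - q⁻¹) • v n (st n (t - 1) y) + v n (st n t y) := by
  rw [Phi, dif_pos ⟨h1, h2⟩]
  have hij : (⟨t - 1, by omega⟩ : Fin n) ≠ ⟨t, h2⟩ := by
    simp only [ne_eq, Fin.mk.injEq]; omega
  rw [phiAux_v n _ _ hij]
  have hαi : st n (t - 1) y ⟨t - 1, by omega⟩ = 0 := by
    show (if t - 1 = t - 1 ∨ t - 1 = y then (0 : Fin 2) else 1) = 0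
    rw [if_pos (Or.inl rfl)]
  have hαj : st n (t - 1) y ⟨t, h2⟩ = 1 := by
    show (if t = t - 1 ∨ t = y then (0 : Fin 2) else 1) = 1
    rw [if_neg (by omega)]
  rw [hαi, hαj]
  rw [Fintype.sum_prod_type]
  simp only [Fin.sum_univ_two]
  rw [update2_st n (t - 1) y (t - 1) y ⟨t - 1, by omega⟩ ⟨t, h2⟩ 0 1
    (by rw [if_pos (Or.inl rfl)])
    (by show (1 : Fin 2) = if t = t - 1 ∨ t = y then 0 else 1; rw [if_neg (by omega)])
    (fun k _ _ => Iff.rfl)]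
  rw [update2_st n (t - 1) y t y ⟨t - 1, by omega⟩ ⟨t, h2⟩ 1 0
    (by show (1 : Fin 2) = if t - 1 = t ∨ t - 1 = y then 0 else 1; rw [if_neg (by omega)])
    (by show (0 : Fin 2) = if t = t ∨ t = y then 0 else 1; rw [if_pos (Or.inl rfl)])
    (fun k hk1 hk2 => by
      have h1' : k ≠ t - 1 := hk1
      have h2' : k ≠ t := hk2
      omega)]
  simp (config := { decide := true }) [Rmat]
lemma sum_split_top {M : Type*} [AddCommMonoid M] (b : ℕ) (hb : 1 ≤ b) (f : ℕ → M) :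
    ∑ r ∈ Finset.range b, f r = (∑ r ∈ Finset.range (b - 1), f r) + f (b - 1) := by
  conv_lhs => rw [show b = b - 1 + 1 by omega]
  exact Finset.sum_range_succ f (b - 1)

lemma sum_split_bot {M : Type*} [AddCommMonoid M] (c : ℕ) (hc : 1 ≤ c) (f : ℕ → M) :
    ∑ s ∈ Finset.range c, f s = f 0 + ∑ s ∈ Finset.range (c - 1), f (s + 1) := by
  conv_lhs => rw [show c = c - 1 + 1 by omega]
  rw [Finset.sum_range_succ']
  exact add_comm _ _
set_option maxHeartbeats 8000000 in
theorem stmt17 (b c : ℕ) (hb : 2 ≤ b) (hc : 2 ≤ c) :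
    Phi (b + c) b (conc (Theta b) (Theta c))
      = q • conc (Theta b) (Theta c)
        + castT (by omega : (b + 1) + (c - 1) = b + c) (conc (Theta (b + 1)) (Theta (c - 1)))
        + castT (by omega : (b - 1) + (c + 1) = b + c) (conc (Theta (b - 1)) (Theta (c + 1))) := by
  have hb1 : (1:ℕ) ≤ b := by omega
  have hc1 : (1:ℕ) ≤ c := by omega
  have e1 : conc (Theta b) (Theta c)
      = ∑ r ∈ Finset.range b, ∑ s ∈ Finset.range c, Cf b c r s • v (b + c) (st (b + c) r (b + s)) :=
    conc_theta_cast b c (b + c) rfl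
  rw [e1, conc_theta_cast (b + 1) (c - 1) (b + c) (by omega),
      conc_theta_cast (b - 1) (c + 1) (b + c) (by omega)]
  simp only [map_sum, map_smul]
  simp only [Finset.smul_sum, smul_smul]
  simp only [sum_split_top (b + 1) (by omega : (1:ℕ) ≤ b + 1)]
  simp only [Nat.add_sub_cancel]
  simp only [sum_split_bot (c + 1) (by omega : (1:ℕ) ≤ c + 1)]
  simp only [Nat.add_sub_cancel]
  simp only [sum_split_top b hb1]
  simp only [sum_split_bot c hc1]
  simp only [Nat.add_zero, Nat.zero_add]
  simp only [Finset.sum_add_distrib]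
  have hL1 : (∑ x ∈ Finset.range (b-1), Cf b c x 0 • (Phi (b+c) b) (v (b+c) (st (b+c) x b)))
      = ∑ x ∈ Finset.range (b-1), Cf (b-1) (c+1) x 0 • v (b+c) (st (b+c) x (b-1)) := by
    refine Finset.sum_congr rfl fun x hx => ?_
    rw [Finset.mem_range] at hx
    rw [phi_case10 (b+c) b x (by omega) (by omega) (by omega) (by omega)]
    congr 1
    simp only [Cf]
    rw [show b-1-x = b-2-x+1 by omega, show b-1-1-x = b-2-x by omega,
        show c-1-0 = c-1 by omega, show c+1-1-0 = c-1+1 by omega]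
    ring
  have hL2 : (∑ x ∈ Finset.range (b-1), ∑ s ∈ Finset.range (c-1),
        Cf b c x (s+1) • (Phi (b+c) b) (v (b+c) (st (b+c) x (b+(s+1)))))
      = (∑ x ∈ Finset.range (b-1), ∑ s ∈ Finset.range (c-1),
          (q * Cf b c x (s+1)) • v (b+c) (st (b+c) x (b+(s+1))))
        + (∑ x ∈ Finset.range (b-1), ∑ s ∈ Finset.range (c-1),
          Cf (b+1) (c-1) x s • v (b+c) (st (b+c) x (b+1+s)))
        + (∑ x ∈ Finset.range (b-1), ∑ s ∈ Finset.range (c-1),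
          Cf (b-1) (c+1) x (s+1+1) • v (b+c) (st (b+c) x (b-1+(s+1+1)))) := by
    rw [← Finset.sum_add_distrib, ← Finset.sum_add_distrib]
    refine Finset.sum_congr rfl fun x hx => ?_
    rw [Finset.mem_range] at hx
    rw [← Finset.sum_add_distrib, ← Finset.sum_add_distrib]
    refine Finset.sum_congr rfl fun s hs => ?_
    rw [Finset.mem_range] at hs
    rw [phi_case11 (b+c) b x (b+(s+1)) (by omega) (by omega) (by omega) (by omega)
      (by omega) (by omega)]
    rw [smul_smul]
    rw [show b+1+s = b+(s+1) by omega, show b-1+(s+1+1) = b+(s+1) by omega]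
    rw [← add_smul, ← add_smul]
    congr 1
    simp only [Cf]
    rw [show b-1-x = b-2-x+1 by omega, show b+1-1-x = b-2-x+1+1 by omega,
        show b-1-1-x = b-2-x by omega, show c-1-(s+1) = c-2-s by omega,
        show c-1-1-s = c-2-s by omega, show c+1-1-(s+1+1) = c-2-s by omega]
    linear_combination ((-1:K)^x * (-1)^s * q⁻¹^(b-2-x) * q⁻¹^(c-2-s)) * qq
  have hL3 : Cf b c (b-1) 0 • (Phi (b+c) b) (v (b+c) (st (b+c) (b-1) b))
      = (q * Cf b c (b-1) 0) • v (b+c) (st (b+c) (b-1) b) := by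
    rw [phi_case00 (b+c) b (by omega) (by omega), smul_smul, mul_comm]
  have hL4 : (∑ s ∈ Finset.range (c-1),
        Cf b c (b-1) (s+1) • (Phi (b+c) b) (v (b+c) (st (b+c) (b-1) (b+(s+1)))))
      = ((∑ s ∈ Finset.range (c-1),
          (q * Cf b c (b-1) (s+1)) • v (b+c) (st (b+c) (b-1) (b+(s+1))))
         + ∑ s ∈ Finset.range (c-1),
          Cf (b+1) (c-1) (b-1) s • v (b+c) (st (b+c) (b-1) (b+1+s)))
        + ∑ s ∈ Finset.range (c-1),
          Cf (b+1) (c-1) b s • v (b+c) (st (b+c) b (b+1+s)) := by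
    rw [← Finset.sum_add_distrib, ← Finset.sum_add_distrib]
    refine Finset.sum_congr rfl fun s hs => ?_
    rw [Finset.mem_range] at hs
    rw [phi_case01 (b+c) b (b+(s+1)) (by omega) (by omega) (by omega) (by omega)]
    rw [smul_add, smul_smul]
    rw [show b+1+s = b+(s+1) by omega]
    congr 1
    · rw [← add_smul]
      congr 1
      simp only [Cf]
      rw [show b-1-(b-1) = 0 by omega, show b+1-1-(b-1) = 1 by omega,
          show c-1-(s+1) = c-2-s by omega, show c-1-1-s = c-2-s by omega]
      ring
    · congr 1
      simp only [Cf]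
      rw [show b-1-(b-1) = 0 by omega, show b+1-1-b = 0 by omega,
          show c-1-(s+1) = c-2-s by omega, show c-1-1-s = c-2-s by omega,
          show ((-1:K))^b = (-1)^(b-1) * (-1) from by rw [← pow_succ]; congr 1; omega]
      ring
  have hX2 : (∑ x ∈ Finset.range (b-1), (q * Cf b c x 0) • v (b+c) (st (b+c) x b))
      = - ∑ x ∈ Finset.range (b-1), Cf (b-1) (c+1) x 1 • v (b+c) (st (b+c) x (b-1+1)) := by
    rw [← Finset.sum_neg_distrib]
    refine Finset.sum_congr rfl fun x hx => ?_
    rw [Finset.mem_range] at hx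
    rw [show b-1+1 = b by omega, ← neg_smul]
    congr 1
    simp only [Cf]
    rw [show b-1-x = b-2-x+1 by omega, show b-1-1-x = b-2-x by omega,
        show c-1-0 = c-1 by omega, show c+1-1-1 = c-1 by omega]
    linear_combination ((-1:K)^x * q⁻¹^(b-2-x) * q⁻¹^(c-1)) * qq
  rw [hL1, hL2, hL3, hL4, hX2]
  abel

end
end
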